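/- arXiv:2007.09519 — 3 statements merged into one kernel-verified Lean document; each statement's English description precedes it below -/
import Mathlib

section
/- If β_n ≤ γ, then for every τ ∈ 𝒯 one has R^{[0,T]}(∞) ≤ R^τ(∞); that is, the interval [0, T] minimizes R^τ(∞) over 𝒯. -/
open Set Filter MeasureTheory Topology Asymptotics
open scoped Classical

noncomputable section

/-- The transmission rate: `βq` on the quarantine set `τ`, `βn` elsewhere. -/
def betaFun (βq βn : ℝ) (τ : Set ℝ) : ℝ → ℝ := fun t => if t ∈ τ then βq else βn

/-- `(S, I)` solves the SIR system `S' = -β S I`, `I' = β S I - γ I` on `[0, ∞)`,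
in integrated form. -/
def IsSIR (β : ℝ → ℝ) (γ : ℝ) (S I : ℝ → ℝ) : Prop :=
  ContinuousOn S (Ici 0) ∧ ContinuousOn I (Ici 0) ∧
    ∀ t ∈ Ici (0 : ℝ),
      (S t = S 0 - ∫ s in (0 : ℝ)..t, β s * S s * I s) ∧
      (I t = I 0 + ∫ s in (0 : ℝ)..t, (β s * S s * I s - γ * I s))

/-- `(S, I, R)` solves the full SIR system `S' = -β S I`, `I' = β S I - γ I`,
`R' = γ I` on `[0, ∞)`, in integrated form. -/
def IsSIRFull (β : ℝ → ℝ) (γ : ℝ) (S I R : ℝ → ℝ) : Prop :=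
  IsSIR β γ S I ∧ ∀ t ∈ Ici (0 : ℝ), R t = R 0 + ∫ s in (0 : ℝ)..t, γ * I s

/-- `τ` belongs to the class `𝒯`: a finite union of closed intervals contained in
`[0, ∞)` with total length `T`. -/
def MemTau (T : ℝ) (τ : Set ℝ) : Prop :=
  τ ⊆ Ici 0 ∧
    (∃ (n : ℕ) (a b : Fin n → ℝ), (∀ i, a i ≤ b i) ∧ τ = ⋃ i, Icc (a i) (b i)) ∧
    volume τ = ENNReal.ofReal T

/-- elementary exp inequality -/
lemma exp_sub_exp_le {a b : ℝ} (ha : 0 ≤ a) (hab : a ≤ b) :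
    Real.exp (-a) - Real.exp (-b) ≤ b - a := by
  have h1 : Real.exp (-a) ≤ 1 := Real.exp_le_one_iff.mpr (by linarith)
  have h2 : (a - b) + 1 ≤ Real.exp (a - b) := Real.add_one_le_exp _
  have h3 : Real.exp (-b) = Real.exp (-a) * Real.exp (a - b) := by
    rw [← Real.exp_add]; ring_nf
  have h4 : 0 ≤ Real.exp (a-b) := (Real.exp_pos _).le
  nlinarith [Real.exp_pos (-a)]

/-- gluing: if `f` is continuous on `[a,b]` and has nonpositive derivative off a finite
set, then `f b ≤ f a`. -/
lemma glue_antitone_aux :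
    ∀ (n : ℕ) (D : Finset ℝ) (f : ℝ → ℝ) (a b : ℝ), D.card ≤ n → a ≤ b →
      ContinuousOn f (Icc a b) →
      (∀ x ∈ Ioo a b, x ∉ D → ∃ f', HasDerivAt f f' x ∧ f' ≤ 0) → f b ≤ f a := by
  intro n
  induction n with
  | zero =>
    intro D f a b hcard hab hcont hder
    have hD : D = ∅ := Finset.card_eq_zero.mp (le_antisymm hcard (Nat.zero_le _))
    have h := antitoneOn_of_deriv_nonpos (convex_Icc a b) hcont
      (by
        intro x hx
        rw [interior_Icc] at hx
        obtain ⟨f', hf', _⟩ := hder x hx (by simp [hD])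
        exact hf'.differentiableAt.differentiableWithinAt)
      (by
        intro x hx
        rw [interior_Icc] at hx
        obtain ⟨f', hf', hle⟩ := hder x hx (by simp [hD])
        rw [hf'.deriv]; exact hle)
    exact h (left_mem_Icc.mpr hab) (right_mem_Icc.mpr hab) hab
  | succ n ih =>
    intro D f a b hcard hab hcont hder
    by_cases hd : ∃ d ∈ D, d ∈ Ioo a b
    · obtain ⟨d, hdD, hdab⟩ := hd
      have hcard' : (D.erase d).card ≤ n := by
        have := Finset.card_erase_of_mem hdD
        omega
      have h1 : f d ≤ f a := by
        refine ih (D.erase d) f a d hcard' hdab.1.le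
          (hcont.mono (Icc_subset_Icc le_rfl hdab.2.le)) ?_
        intro x hx hxD
        refine hder x ⟨hx.1, hx.2.trans hdab.2⟩ ?_
        intro hxDmem
        exact hxD (Finset.mem_erase.mpr ⟨ne_of_lt hx.2, hxDmem⟩)
      have h2 : f b ≤ f d := by
        refine ih (D.erase d) f d b hcard' hdab.2.le
          (hcont.mono (Icc_subset_Icc hdab.1.le le_rfl)) ?_
        intro x hx hxD
        refine hder x ⟨hdab.1.trans hx.1, hx.2⟩ ?_
        intro hxDmem
        exact hxD (Finset.mem_erase.mpr ⟨(ne_of_gt hx.1), hxDmem⟩)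
      exact h2.trans h1
    · push_neg at hd
      have h := antitoneOn_of_deriv_nonpos (convex_Icc a b) hcont
        (by
          intro x hx
          rw [interior_Icc] at hx
          obtain ⟨f', hf', _⟩ := hder x hx (fun hmem => (hd x hmem) hx)
          exact hf'.differentiableAt.differentiableWithinAt)
        (by
          intro x hx
          rw [interior_Icc] at hx
          obtain ⟨f', hf', hle⟩ := hder x hx (fun hmem => (hd x hmem) hx)
          rw [hf'.deriv]; exact hle)
      exact h (left_mem_Icc.mpr hab) (right_mem_Icc.mpr hab) hab

lemma glue_antitone (D : Finset ℝ) {f : ℝ → ℝ} {a b : ℝ} (hab : a ≤ b)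
    (hcont : ContinuousOn f (Icc a b))
    (hder : ∀ x ∈ Ioo a b, x ∉ D → ∃ f', HasDerivAt f f' x ∧ f' ≤ 0) : f b ≤ f a :=
  glue_antitone_aux D.card D f a b le_rfl hab hcont hder

lemma glue_const (D : Finset ℝ) {f : ℝ → ℝ} {a b : ℝ} (hab : a ≤ b)
    (hcont : ContinuousOn f (Icc a b))
    (hder : ∀ x ∈ Ioo a b, x ∉ D → HasDerivAt f 0 x) : f b = f a := by
  have h1 : f b ≤ f a := glue_antitone D hab hcont
    (fun x hx hxD => ⟨0, hder x hx hxD, le_rfl⟩)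
  have h2 : f a ≤ f b := by
    have := glue_antitone D hab (hcont.neg)
      (fun x hx hxD => ⟨0, by simpa using (hder x hx hxD).neg, le_rfl⟩)
    simpa using this
  exact le_antisymm h1 h2

lemma exists_tendsto_of_monotoneOn {f : ℝ → ℝ} (hm : MonotoneOn f (Ici 0))
    (hb : BddAbove (f '' Ici 0)) :
    ∃ X, Tendsto f atTop (𝓝 X) ∧ ∀ t, 0 ≤ t → f t ≤ X := by
  set g : ℝ → ℝ := fun t => f (max t 0) with hg
  have hmono : Monotone g := fun s t hst =>
    hm (mem_Ici.mpr (le_max_right _ _)) (mem_Ici.mpr (le_max_right _ _)) (max_le_max hst le_rfl)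
  have hbdd : BddAbove (range g) := by
    refine hb.mono ?_
    rintro y ⟨t, rfl⟩
    exact ⟨max t 0, mem_Ici.mpr (le_max_right _ _), rfl⟩
  refine ⟨⨆ t, g t, ?_, ?_⟩
  · have hgt : Tendsto g atTop (𝓝 (⨆ t, g t)) := tendsto_atTop_ciSup hmono hbdd
    refine hgt.congr' ?_
    filter_upwards [eventually_ge_atTop (0:ℝ)] with t ht
    simp [hg, max_eq_left ht]
  · intro t ht
    have : g t ≤ ⨆ t, g t := le_ciSup hbdd t
    simpa [hg, max_eq_left ht] using this

lemma contOn_primitive {f : ℝ → ℝ}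
    (hf : ∀ M : ℝ, 0 ≤ M → IntervalIntegrable f volume 0 M) :
    ContinuousOn (fun t => ∫ s in (0:ℝ)..t, f s) (Ici 0) := by
  intro t ht
  have ht' : (0:ℝ) ≤ t := ht
  have h1 : ContinuousOn (fun u => ∫ s in (0:ℝ)..u, f s) (uIcc 0 (t+1)) :=
    intervalIntegral.continuousOn_primitive_interval' (hf (t+1) (by linarith)) left_mem_uIcc
  rw [uIcc_of_le (by linarith : (0:ℝ) ≤ t+1)] at h1
  have hmem : Icc (0:ℝ) (t+1) ∈ 𝓝[Ici 0] t := by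
    refine mem_nhdsWithin.mpr ⟨Iio (t+1), isOpen_Iio, by simp, ?_⟩
    rintro x ⟨hx1, hx2⟩
    exact ⟨hx2, le_of_lt hx1⟩
  exact (h1 t ⟨ht', by linarith⟩).mono_of_mem_nhdsWithin hmem

structure SIRScen (βq βn γ T I₀ : ℝ) where
  hβq : 0 < βq
  hβ : βq < βn
  hγ : 0 < γ
  hT : 0 < T
  hI₀ : I₀ ∈ Ioo (0 : ℝ) 1
  hsub : βn ≤ γ
  τ : Set ℝ
  nn : ℕ
  fa : Fin nn → ℝ
  fb : Fin nn → ℝ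
  hab : ∀ i, fa i ≤ fb i
  hτ : τ = ⋃ i, Icc (fa i) (fb i)
  hvol : volume τ = ENNReal.ofReal T
  S : ℝ → ℝ
  I : ℝ → ℝ
  R : ℝ → ℝ
  hsol : IsSIRFull (betaFun βq βn τ) γ S I R
  hS0 : S 0 = 1 - I₀
  hI0 : I 0 = I₀
  hR0 : R 0 = 0
  L : ℝ
  hL : Tendsto R atTop (𝓝 L)

namespace SIRScen

variable {βq βn γ T I₀ : ℝ} (sc : SIRScen βq βn γ T I₀)

def b : ℝ → ℝ := betaFun βq βn sc.τ
def P (t : ℝ) : ℝ := ∫ s in (0:ℝ)..t, sc.I s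
def q (t : ℝ) : ℝ := ∫ s in (0:ℝ)..t, sc.τ.indicator sc.I s
def x (t : ℝ) : ℝ := ∫ s in (0:ℝ)..t, sc.b s * sc.I s
def w (t : ℝ) : ℝ := ∫ s in (0:ℝ)..t, sc.τ.indicator (fun _ => (1:ℝ)) s
def D : Finset ℝ :=
  {0} ∪ Finset.image sc.fa Finset.univ ∪ Finset.image sc.fb Finset.univ

lemma meas : MeasurableSet sc.τ := by
  rw [sc.hτ]; exact MeasurableSet.iUnion fun i => measurableSet_Icc

lemma closed : IsClosed sc.τ := by
  rw [sc.hτ]; exact isClosed_iUnion_of_finite fun i => isClosed_Icc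

lemma contS : ContinuousOn sc.S (Ici 0) := sc.hsol.1.1
lemma contI : ContinuousOn sc.I (Ici 0) := sc.hsol.1.2.1

/-- local structure of `τ` away from the endpoints -/
lemma loc {t : ℝ} (ht : t ∉ sc.D) : sc.τ ∈ 𝓝 t ∨ sc.τᶜ ∈ 𝓝 t := by
  by_cases hmem : t ∈ sc.τ
  · left
    rw [sc.hτ] at hmem
    obtain ⟨i, hiU⟩ := mem_iUnion.mp hmem
    have h1 : t ≠ sc.fa i := by
      intro h; apply ht; simp [D, Finset.mem_union]; right; left; exact ⟨i, h.symm⟩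
    have h2 : t ≠ sc.fb i := by
      intro h; apply ht; simp [D, Finset.mem_union]; right; right; exact ⟨i, h.symm⟩
    have : t ∈ Ioo (sc.fa i) (sc.fb i) :=
      ⟨lt_of_le_of_ne hiU.1 (Ne.symm h1), lt_of_le_of_ne hiU.2 h2⟩
    refine Filter.mem_of_superset (isOpen_Ioo.mem_nhds this) ?_
    refine subset_trans Ioo_subset_Icc_self ?_
    rw [sc.hτ]; exact subset_iUnion_of_subset i le_rfl
  · right
    exact sc.closed.isOpen_compl.mem_nhds hmem

lemma zero_mem_D : (0:ℝ) ∈ sc.D := by simp [D]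

/-- interval integrability of continuous-on-`Ici 0` functions on positive intervals -/
lemma II_of_contOn {f : ℝ → ℝ} (hf : ContinuousOn f (Ici 0)) {u v : ℝ}
    (hu : 0 ≤ u) (hv : 0 ≤ v) : IntervalIntegrable f volume u v := by
  apply ContinuousOn.intervalIntegrable
  refine hf.mono ?_
  rw [uIcc_eq_union]
  rintro s (hs | hs)
  · exact le_trans hu hs.1
  · exact le_trans hv hs.1

lemma II_indicator {f : ℝ → ℝ} {u v : ℝ} (hf : IntervalIntegrable f volume u v) :
    IntervalIntegrable (sc.τ.indicator f) volume u v := by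
  rw [intervalIntegrable_iff] at hf ⊢
  exact hf.indicator sc.meas

lemma II_I {u v : ℝ} (hu : 0 ≤ u) (hv : 0 ≤ v) :
    IntervalIntegrable sc.I volume u v := II_of_contOn sc.contI hu hv

lemma II_indI {u v : ℝ} (hu : 0 ≤ u) (hv : 0 ≤ v) :
    IntervalIntegrable (sc.τ.indicator sc.I) volume u v :=
  sc.II_indicator (sc.II_I hu hv)

lemma II_ind1 {u v : ℝ} : IntervalIntegrable (sc.τ.indicator (fun _ => (1:ℝ))) volume u v :=
  sc.II_indicator intervalIntegrable_const

lemma b_mul_eq (f : ℝ → ℝ) :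
    (fun s => sc.b s * f s) =
      fun s => βn * f s - (βn - βq) * sc.τ.indicator f s := by
  funext s
  by_cases h : s ∈ sc.τ <;> simp [b, betaFun, indicator, h] <;> ring

lemma II_bf {f : ℝ → ℝ} (hf : ContinuousOn f (Ici 0)) {u v : ℝ}
    (hu : 0 ≤ u) (hv : 0 ≤ v) :
    IntervalIntegrable (fun s => sc.b s * f s) volume u v := by
  rw [sc.b_mul_eq f]
  exact ((II_of_contOn hf hu hv).const_mul βn).sub
    ((sc.II_indicator (II_of_contOn hf hu hv)).const_mul (βn - βq))

lemma contSI : ContinuousOn (fun s => sc.S s * sc.I s) (Ici 0) := sc.contS.mul sc.contI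

lemma II_bSI {u v : ℝ} (hu : 0 ≤ u) (hv : 0 ≤ v) :
    IntervalIntegrable (fun s => sc.b s * sc.S s * sc.I s) volume u v := by
  have := sc.II_bf sc.contSI hu hv
  simpa [mul_assoc] using this

lemma II_bI {u v : ℝ} (hu : 0 ≤ u) (hv : 0 ≤ v) :
    IntervalIntegrable (fun s => sc.b s * sc.I s) volume u v := sc.II_bf sc.contI hu hv

lemma II_bSg {u v : ℝ} (hu : 0 ≤ u) (hv : 0 ≤ v) :
    IntervalIntegrable (fun s => sc.b s * sc.S s - γ) volume u v :=
  (sc.II_bf sc.contS hu hv).sub intervalIntegrable_const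

lemma S_eq {t : ℝ} (ht : 0 ≤ t) :
    sc.S t = (1 - I₀) - ∫ s in (0:ℝ)..t, sc.b s * sc.S s * sc.I s := by
  have := (sc.hsol.1.2.2 t ht).1
  rw [sc.hS0] at this; exact this

lemma I_eq {t : ℝ} (ht : 0 ≤ t) :
    sc.I t = I₀ + ∫ s in (0:ℝ)..t, (sc.b s * sc.S s * sc.I s - γ * sc.I s) := by
  have := (sc.hsol.1.2.2 t ht).2
  rw [sc.hI0] at this; exact this

lemma R_eq {t : ℝ} (ht : 0 ≤ t) : sc.R t = γ * sc.P t := by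
  have := sc.hsol.2 t ht
  rw [sc.hR0] at this
  simpa [P, intervalIntegral.integral_const_mul] using this

lemma sum_eq {t : ℝ} (ht : 0 ≤ t) :
    sc.I t = I₀ + (1 - I₀) - sc.S t - γ * sc.P t := by
  have h1 := sc.I_eq ht
  have h2 := sc.S_eq ht
  have h3 : ∫ s in (0:ℝ)..t, (sc.b s * sc.S s * sc.I s - γ * sc.I s) =
      (∫ s in (0:ℝ)..t, sc.b s * sc.S s * sc.I s) - γ * sc.P t := by
    rw [intervalIntegral.integral_sub (sc.II_bSI le_rfl ht) ((sc.II_I le_rfl ht).const_mul γ),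
      intervalIntegral.integral_const_mul]
    rfl
  rw [h3] at h1
  have h4 : (∫ s in (0:ℝ)..t, sc.b s * sc.S s * sc.I s) = (1 - I₀) - sc.S t := by
    linarith
  rw [h1, h4]; ring

end SIRScen
namespace SIRScen

variable {βq βn γ T I₀ : ℝ} (sc : SIRScen βq βn γ T I₀)

lemma contAtI {t : ℝ} (ht : 0 < t) : ContinuousAt sc.I t :=
  sc.contI.continuousAt (Ici_mem_nhds ht)

lemma contAtS {t : ℝ} (ht : 0 < t) : ContinuousAt sc.S t :=
  sc.contS.continuousAt (Ici_mem_nhds ht)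

lemma aesm_of_contOn {f : ℝ → ℝ} (hf : ContinuousOn f (Ici 0)) :
    AEStronglyMeasurable f (volume.restrict (Ioi (0:ℝ))) :=
  (hf.mono Ioi_subset_Ici_self).aestronglyMeasurable measurableSet_Ioi

lemma meas_b : Measurable sc.b := by
  unfold b betaFun
  exact Measurable.ite sc.meas measurable_const measurable_const

lemma smaf_of_contOn {f : ℝ → ℝ} (hf : ContinuousOn f (Ici 0)) {t : ℝ} (ht : 0 < t) :
    StronglyMeasurableAtFilter f (𝓝 t) :=
  ⟨Ioi 0, Ioi_mem_nhds ht, aesm_of_contOn hf⟩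

lemma smaf_bf {f : ℝ → ℝ} (hf : ContinuousOn f (Ici 0)) {t : ℝ} (ht : 0 < t) :
    StronglyMeasurableAtFilter (fun s => sc.b s * f s) (𝓝 t) :=
  ⟨Ioi 0, Ioi_mem_nhds ht, (sc.meas_b.aestronglyMeasurable).mul (aesm_of_contOn hf)⟩

/-- the coefficient `b` is locally constant off `D`; hence products with continuous
functions are continuous off `D`. -/
lemma contAt_bf {f : ℝ → ℝ} (hf : ContinuousOn f (Ici 0)) {t : ℝ}
    (ht : 0 < t) (htD : t ∉ sc.D) : ContinuousAt (fun s => sc.b s * f s) t := by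
  have hcf : ContinuousAt f t := hf.continuousAt (Ici_mem_nhds ht)
  rcases sc.loc htD with h | h
  · have heq : (fun s => sc.b s * f s) =ᶠ[𝓝 t] fun s => βq * f s := by
      filter_upwards [h] with s hs
      simp [b, betaFun, hs]
    exact ContinuousAt.congr (hcf.const_mul βq) heq.symm
  · have heq : (fun s => sc.b s * f s) =ᶠ[𝓝 t] fun s => βn * f s := by
      filter_upwards [h] with s hs
      rw [mem_compl_iff] at hs
      simp [b, betaFun, hs]
    exact ContinuousAt.congr (hcf.const_mul βn) heq.symm

/-- FTC for primitives based at `0`. -/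
lemma hasDeriv_primitive {f : ℝ → ℝ} {t : ℝ} (hII : IntervalIntegrable f volume 0 t)
    (hm : StronglyMeasurableAtFilter f (𝓝 t)) (hc : ContinuousAt f t) :
    HasDerivAt (fun u => ∫ s in (0:ℝ)..u, f s) (f t) t :=
  intervalIntegral.integral_hasDerivAt_right hII hm hc

lemma derivP {t : ℝ} (ht : 0 < t) : HasDerivAt sc.P (sc.I t) t :=
  hasDeriv_primitive (sc.II_I le_rfl ht.le) (smaf_of_contOn sc.contI ht) (sc.contAtI ht)

lemma derivx {t : ℝ} (ht : 0 < t) (htD : t ∉ sc.D) :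
    HasDerivAt sc.x (sc.b t * sc.I t) t :=
  hasDeriv_primitive (sc.II_bI le_rfl ht.le) (sc.smaf_bf sc.contI ht)
    (sc.contAt_bf sc.contI ht htD)

lemma derivS {t : ℝ} (ht : 0 < t) (htD : t ∉ sc.D) :
    HasDerivAt sc.S (-(sc.b t * sc.S t * sc.I t)) t := by
  have h1 : HasDerivAt (fun u => ∫ s in (0:ℝ)..u, sc.b s * (sc.S s * sc.I s))
      (sc.b t * (sc.S t * sc.I t)) t :=
    hasDeriv_primitive (by simpa [mul_assoc] using sc.II_bSI le_rfl ht.le)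
      (sc.smaf_bf sc.contSI ht) (sc.contAt_bf sc.contSI ht htD)
  have h2 : HasDerivAt (fun u => (1 - I₀) - ∫ s in (0:ℝ)..u, sc.b s * (sc.S s * sc.I s))
      (-(sc.b t * sc.S t * sc.I t)) t := by
    have := h1.const_sub (1 - I₀)
    simpa [mul_assoc] using this
  refine h2.congr_of_eventuallyEq ?_
  filter_upwards [Ioi_mem_nhds ht] with u hu
  rw [sc.S_eq (le_of_lt hu)]
  simp [mul_assoc]

lemma derivI {t : ℝ} (ht : 0 < t) (htD : t ∉ sc.D) :
    HasDerivAt sc.I (sc.b t * sc.S t * sc.I t - γ * sc.I t) t := by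
  have hint : ContinuousAt (fun s => sc.b s * (sc.S s * sc.I s) - γ * sc.I s) t :=
    (sc.contAt_bf sc.contSI ht htD).sub ((sc.contAtI ht).const_mul γ)
  have h1 : HasDerivAt (fun u => ∫ s in (0:ℝ)..u, (sc.b s * (sc.S s * sc.I s) - γ * sc.I s))
      (sc.b t * (sc.S t * sc.I t) - γ * sc.I t) t := by
    refine hasDeriv_primitive ?_ ?_ hint
    · have := (sc.II_bSI le_rfl ht.le).sub ((sc.II_I le_rfl ht.le).const_mul γ)
      simpa [mul_assoc] using this
    · exact ⟨Ioi 0, Ioi_mem_nhds ht,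
        ((sc.meas_b.aestronglyMeasurable).mul (aesm_of_contOn sc.contSI)).sub
          ((aesm_of_contOn sc.contI).const_mul γ)⟩
  have h2 := h1.const_add I₀
  rw [show sc.b t * (sc.S t * sc.I t) - γ * sc.I t
      = sc.b t * sc.S t * sc.I t - γ * sc.I t by ring] at h2
  refine h2.congr_of_eventuallyEq ?_
  filter_upwards [Ioi_mem_nhds ht] with u hu
  rw [sc.I_eq (le_of_lt hu)]
  simp [mul_assoc]

lemma derivg {t : ℝ} (ht : 0 < t) (htD : t ∉ sc.D) :
    HasDerivAt (fun u => ∫ s in (0:ℝ)..u, (sc.b s * sc.S s - γ)) (sc.b t * sc.S t - γ) t := by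
  refine hasDeriv_primitive (sc.II_bSg le_rfl ht.le) ?_
    ((sc.contAt_bf sc.contS ht htD).sub continuousAt_const)
  exact ⟨Ioi 0, Ioi_mem_nhds ht,
    ((sc.meas_b.aestronglyMeasurable).mul (aesm_of_contOn sc.contS)).sub aestronglyMeasurable_const⟩

lemma contP : ContinuousOn sc.P (Ici 0) := contOn_primitive (fun M hM => sc.II_I le_rfl hM)
lemma contq : ContinuousOn sc.q (Ici 0) := contOn_primitive (fun M hM => sc.II_indI le_rfl hM)
lemma contx : ContinuousOn sc.x (Ici 0) := contOn_primitive (fun M hM => sc.II_bI le_rfl hM)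
lemma contw : ContinuousOn sc.w (Ici 0) := contOn_primitive (fun M hM => sc.II_ind1)
lemma contg : ContinuousOn (fun u => ∫ s in (0:ℝ)..u, (sc.b s * sc.S s - γ)) (Ici 0) :=
  contOn_primitive (fun M hM => sc.II_bSg le_rfl hM)

lemma P_zero : sc.P 0 = 0 := intervalIntegral.integral_same
lemma q_zero : sc.q 0 = 0 := intervalIntegral.integral_same
lemma x_zero : sc.x 0 = 0 := intervalIntegral.integral_same
lemma w_zero : sc.w 0 = 0 := intervalIntegral.integral_same

/-- positivity of `I` via the exponential representation. -/
lemma Ipos {t : ℝ} (ht : 0 ≤ t) : 0 < sc.I t := by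
  set g : ℝ → ℝ := fun u => ∫ s in (0:ℝ)..u, (sc.b s * sc.S s - γ) with hgdef
  set E : ℝ → ℝ := fun u => sc.I u * Real.exp (-(g u)) with hEdef
  have hE : E t = E 0 := by
    refine glue_const sc.D ht ?_ ?_
    · exact ContinuousOn.mul (sc.contI.mono (Icc_subset_Ici_self))
        (((sc.contg.mono (Icc_subset_Ici_self)).neg).rexp)
    · intro u hu huD
      have hu0 : 0 < u := hu.1
      have hI := sc.derivI hu0 huD
      have hg := sc.derivg hu0 huD
      have hexp : HasDerivAt (fun v => Real.exp (-(g v)))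
          (-(sc.b u * sc.S u - γ) * Real.exp (-(g u))) u := by
        have := (hg.neg).exp
        simpa [mul_comm] using this
      have := hI.mul hexp
      have heq : (sc.b u * sc.S u * sc.I u - γ * sc.I u) * Real.exp (-(g u)) +
          sc.I u * (-(sc.b u * sc.S u - γ) * Real.exp (-(g u))) = 0 := by ring
      rw [heq] at this
      exact this
  have hg0 : g 0 = 0 := intervalIntegral.integral_same
  have hE0 : E 0 = I₀ := by simp [hEdef, hg0, sc.hI0]
  have h5 : sc.I t * Real.exp (-(g t)) = I₀ := hE.trans hE0
  have h7 : Real.exp (-(g t)) * Real.exp (g t) = 1 := by rw [← Real.exp_add]; simp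
  have hIt : sc.I t = I₀ * Real.exp (g t) := by
    calc sc.I t = (sc.I t * Real.exp (-(g t))) * Real.exp (g t) := by
          rw [mul_assoc, h7, mul_one]
    _ = I₀ * Real.exp (g t) := by rw [h5]
  rw [hIt]
  exact mul_pos sc.hI₀.1 (Real.exp_pos _)

/-- the exponential formula for `S`. -/
lemma S_formula {t : ℝ} (ht : 0 ≤ t) : sc.S t = (1 - I₀) * Real.exp (-(sc.x t)) := by
  set W : ℝ → ℝ := fun u => sc.S u * Real.exp (sc.x u) with hWdef
  have hW : W t = W 0 := by
    refine glue_const sc.D ht ?_ ?_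
    · exact ContinuousOn.mul (sc.contS.mono (Icc_subset_Ici_self))
        ((sc.contx.mono (Icc_subset_Ici_self)).rexp)
    · intro u hu huD
      have hu0 : 0 < u := hu.1
      have hS := sc.derivS hu0 huD
      have hx := sc.derivx hu0 huD
      have hexp : HasDerivAt (fun v => Real.exp (sc.x v))
          (sc.b u * sc.I u * Real.exp (sc.x u)) u := by
        have := hx.exp
        simpa [mul_comm] using this
      have := hS.mul hexp
      have heq : -(sc.b u * sc.S u * sc.I u) * Real.exp (sc.x u) +
          sc.S u * (sc.b u * sc.I u * Real.exp (sc.x u)) = 0 := by ring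
      rw [heq] at this
      exact this
  have hW0 : W 0 = 1 - I₀ := by simp [hWdef, sc.x_zero, sc.hS0]
  have h5 : sc.S t * Real.exp (sc.x t) = 1 - I₀ := hW.trans hW0
  have h7 : Real.exp (sc.x t) * Real.exp (-(sc.x t)) = 1 := by rw [← Real.exp_add]; simp
  calc sc.S t = (sc.S t * Real.exp (sc.x t)) * Real.exp (-(sc.x t)) := by
        rw [mul_assoc, h7, mul_one]
  _ = (1 - I₀) * Real.exp (-(sc.x t)) := by rw [h5]

lemma Spos {t : ℝ} (ht : 0 ≤ t) : 0 < sc.S t := by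
  rw [sc.S_formula ht]
  exact mul_pos (by linarith [sc.hI₀.2]) (Real.exp_pos _)

end SIRScen
/-- the quarantine curve -/
def Gf (βq γ I₀ : ℝ) (u : ℝ) : ℝ := I₀ + (1 - I₀) * (1 - Real.exp (-(βq * u))) - γ * u

lemma Gf_anti {βq βn γ I₀ : ℝ} (hβq : 0 < βq) (hβ : βq < βn) (hsub : βn ≤ γ)
    (hI₀ : I₀ ∈ Ioo (0:ℝ) 1) {u v : ℝ} (hu : 0 ≤ u) (huv : u ≤ v) :
    Gf βq γ I₀ v ≤ Gf βq γ I₀ u := by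
  have h1 : Real.exp (-(βq * u)) - Real.exp (-(βq * v)) ≤ βq * v - βq * u :=
    exp_sub_exp_le (by positivity) (by nlinarith)
  have h2 : 0 ≤ Real.exp (-(βq * u)) - Real.exp (-(βq * v)) := by
    have := Real.exp_le_exp.mpr (by nlinarith : -(βq * v) ≤ -(βq * u))
    linarith
  have hI1 : I₀ < 1 := hI₀.2
  have hI0 : 0 < I₀ := hI₀.1
  have h3 : (1 - I₀) * (Real.exp (-(βq * u)) - Real.exp (-(βq * v))) ≤ βq * v - βq * u := by
    nlinarith
  have h4 : βq * (v - u) ≤ γ * (v - u) := by nlinarith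
  unfold Gf
  nlinarith

namespace SIRScen

variable {βq βn γ T I₀ : ℝ} (sc : SIRScen βq βn γ T I₀)

lemma split_primitive {f : ℝ → ℝ} {s t : ℝ} (hs : 0 ≤ s) (hst : s ≤ t)
    (hf : ∀ u v : ℝ, 0 ≤ u → 0 ≤ v → IntervalIntegrable f volume u v) :
    (∫ u in (0:ℝ)..t, f u) = (∫ u in (0:ℝ)..s, f u) + ∫ u in s..t, f u :=
  (intervalIntegral.integral_add_adjacent_intervals (hf 0 s le_rfl hs)
    (hf s t hs (hs.trans hst))).symm

lemma mono_primitive {f : ℝ → ℝ}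
    (hf : ∀ u v : ℝ, 0 ≤ u → 0 ≤ v → IntervalIntegrable f volume u v)
    (hpos : ∀ s : ℝ, 0 ≤ s → 0 ≤ f s) :
    MonotoneOn (fun t => ∫ s in (0:ℝ)..t, f s) (Ici 0) := by
  intro s hs t ht hst
  have hsplit := split_primitive hs.out hst hf
  have hnn : 0 ≤ ∫ u in s..t, f u := by
    apply intervalIntegral.integral_nonneg hst
    intro u hu
    exact hpos u (le_trans hs.out hu.1)
  dsimp only
  rw [hsplit]
  linarith

lemma Inonneg {s : ℝ} (hs : 0 ≤ s) : 0 ≤ sc.I s := (sc.Ipos hs).le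

lemma Pmono : MonotoneOn sc.P (Ici 0) :=
  mono_primitive (fun u v hu hv => sc.II_I hu hv) (fun s hs => sc.Inonneg hs)

lemma ind_nonneg {s : ℝ} (hs : 0 ≤ s) : 0 ≤ sc.τ.indicator sc.I s := by
  by_cases h : s ∈ sc.τ
  · rw [indicator_of_mem h]; exact sc.Inonneg hs
  · rw [indicator_of_notMem h]

lemma qmono : MonotoneOn sc.q (Ici 0) :=
  mono_primitive (fun u v hu hv => sc.II_indI hu hv) (fun s hs => sc.ind_nonneg hs)

lemma bpos {s : ℝ} : 0 < sc.b s := by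
  unfold b betaFun
  by_cases h : s ∈ sc.τ <;> simp [h]
  · exact sc.hβq
  · exact sc.hβq.trans sc.hβ

lemma xmono : MonotoneOn sc.x (Ici 0) :=
  mono_primitive (fun u v hu hv => sc.II_bI hu hv)
    (fun s hs => mul_nonneg sc.bpos.le (sc.Inonneg hs))

lemma wmono : MonotoneOn sc.w (Ici 0) :=
  mono_primitive (fun u v _ _ => sc.II_ind1)
    (fun s _ => indicator_nonneg (fun _ _ => zero_le_one) s)

lemma Pnonneg {t : ℝ} (ht : 0 ≤ t) : 0 ≤ sc.P t := by
  have := sc.Pmono (self_mem_Ici) (mem_Ici.mpr ht) ht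
  rwa [sc.P_zero] at this

lemma qnonneg {t : ℝ} (ht : 0 ≤ t) : 0 ≤ sc.q t := by
  have := sc.qmono (self_mem_Ici) (mem_Ici.mpr ht) ht
  rwa [sc.q_zero] at this

lemma wnonneg {t : ℝ} (ht : 0 ≤ t) : 0 ≤ sc.w t := by
  have := sc.wmono (self_mem_Ici) (mem_Ici.mpr ht) ht
  rwa [sc.w_zero] at this

lemma q_le_P {t : ℝ} (ht : 0 ≤ t) : sc.q t ≤ sc.P t := by
  apply intervalIntegral.integral_mono_on ht (sc.II_indI le_rfl ht) (sc.II_I le_rfl ht)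
  intro s hs
  by_cases h : s ∈ sc.τ
  · rw [indicator_of_mem h]
  · rw [indicator_of_notMem h]; exact sc.Inonneg hs.1

lemma x_eq {t : ℝ} (ht : 0 ≤ t) :
    sc.x t = βn * sc.P t - (βn - βq) * sc.q t := by
  unfold x
  rw [sc.b_mul_eq sc.I]
  rw [intervalIntegral.integral_sub ((sc.II_I le_rfl ht).const_mul βn)
    ((sc.II_indI le_rfl ht).const_mul (βn - βq))]
  rw [intervalIntegral.integral_const_mul, intervalIntegral.integral_const_mul]
  rfl

lemma x_le {t : ℝ} (ht : 0 ≤ t) : sc.x t ≤ βn * sc.P t := by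
  rw [sc.x_eq ht]
  have h1 := sc.qnonneg ht
  have h2 := sc.hβ
  nlinarith

lemma x_ge_q {t : ℝ} (ht : 0 ≤ t) : βq * sc.q t ≤ sc.x t := by
  rw [sc.x_eq ht]
  have h1 := sc.q_le_P ht
  have h2 := sc.hβ
  have h3 := sc.hβq
  nlinarith

lemma xnonneg {t : ℝ} (ht : 0 ≤ t) : 0 ≤ sc.x t :=
  le_trans (mul_nonneg sc.hβq.le (sc.qnonneg ht)) (sc.x_ge_q ht)

/-- the key pointwise inequality `I ≤ Gf ∘ q`. -/
lemma Ile {t : ℝ} (ht : 0 ≤ t) : sc.I t ≤ Gf βq γ I₀ (sc.q t) := by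
  have hsum := sc.sum_eq ht
  have hSf := sc.S_formula ht
  have hq := sc.x_ge_q ht
  have h0q : (0:ℝ) ≤ βq * sc.q t := mul_nonneg sc.hβq.le (sc.qnonneg ht)
  have hexp : Real.exp (-(βq * sc.q t)) - Real.exp (-(sc.x t)) ≤ sc.x t - βq * sc.q t :=
    exp_sub_exp_le h0q hq
  have hxeq := sc.x_eq ht
  have hPq := sc.q_le_P ht
  have hI1 : I₀ < 1 := sc.hI₀.2
  have hI0 : 0 < I₀ := sc.hI₀.1
  have hsub := sc.hsub
  have hβ := sc.hβ
  have hβq := sc.hβq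
  have hexp2 : 0 ≤ Real.exp (-(βq * sc.q t)) - Real.exp (-(sc.x t)) := by
    have := Real.exp_le_exp.mpr (by linarith : -(sc.x t) ≤ -(βq * sc.q t))
    linarith
  unfold Gf
  rw [hsum, hSf]
  nlinarith [sc.Pnonneg ht]

/-- limit structure: `x` converges, `I → 0`, and `L = 1 - (1-I₀) e^{-X}`. -/
lemma limits : ∃ X, Tendsto sc.x atTop (𝓝 X) ∧ 0 ≤ X ∧ (∀ t, 0 ≤ t → sc.x t ≤ X) ∧
    sc.L = 1 - (1 - I₀) * Real.exp (-X) ∧ Tendsto sc.I atTop (𝓝 0) := by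
  have hγ := sc.hγ
  have hPlim : Tendsto sc.P atTop (𝓝 (sc.L / γ)) := by
    have h1 : Tendsto (fun t => sc.R t / γ) atTop (𝓝 (sc.L / γ)) := sc.hL.div_const γ
    refine h1.congr' ?_
    filter_upwards [eventually_ge_atTop (0:ℝ)] with t ht
    rw [sc.R_eq ht]
    field_simp
  have hP_le : ∀ t, 0 ≤ t → sc.P t ≤ sc.L / γ := by
    intro t ht
    refine ge_of_tendsto hPlim ?_
    filter_upwards [eventually_ge_atTop (max t 0)] with u hu
    exact sc.Pmono (mem_Ici.mpr ht) (mem_Ici.mpr (le_trans (le_max_right _ _) hu))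
      (le_trans (le_max_left _ _) hu)
  have hLnn : 0 ≤ sc.L / γ := by
    have := hP_le 0 le_rfl
    rw [sc.P_zero] at this
    exact this
  have hbdd : BddAbove (sc.x '' Ici 0) := by
    refine ⟨βn * (sc.L / γ), ?_⟩
    rintro y ⟨t, ht, rfl⟩
    refine (sc.x_le ht).trans ?_
    exact mul_le_mul_of_nonneg_left (hP_le t ht) (sc.hβq.trans sc.hβ).le
  obtain ⟨X, hX, hxle⟩ := exists_tendsto_of_monotoneOn sc.xmono hbdd
  have hX0 : 0 ≤ X := by
    have := hxle 0 le_rfl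
    rwa [sc.x_zero] at this
  have hSlim : Tendsto sc.S atTop (𝓝 ((1 - I₀) * Real.exp (-X))) := by
    have h1 : Tendsto (fun t => (1 - I₀) * Real.exp (-(sc.x t))) atTop
        (𝓝 ((1 - I₀) * Real.exp (-X))) :=
      ((Real.continuous_exp.tendsto (-X)).comp hX.neg).const_mul _
    refine h1.congr' ?_
    filter_upwards [eventually_ge_atTop (0:ℝ)] with t ht
    exact (sc.S_formula ht).symm
  set c : ℝ := I₀ + (1 - I₀) - (1 - I₀) * Real.exp (-X) - γ * (sc.L / γ) with hc
  have hIlim : Tendsto sc.I atTop (𝓝 c) := by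
    have h1 : Tendsto (fun t => I₀ + (1 - I₀) - sc.S t - γ * sc.P t) atTop (𝓝 c) := by
      exact ((tendsto_const_nhds.sub hSlim).sub (hPlim.const_mul γ))
    refine h1.congr' ?_
    filter_upwards [eventually_ge_atTop (0:ℝ)] with t ht
    exact (sc.sum_eq ht).symm
  have hcnn : 0 ≤ c := by
    refine ge_of_tendsto hIlim ?_
    filter_upwards [eventually_ge_atTop (0:ℝ)] with t ht
    exact sc.Inonneg ht
  have hczero : c = 0 := by
    by_contra hne
    have hcpos : 0 < c := lt_of_le_of_ne hcnn (Ne.symm hne)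
    have hev : ∀ᶠ t in atTop, c / 2 < sc.I t :=
      hIlim.eventually (lt_mem_nhds (half_lt_self hcpos))
    obtain ⟨t₁, ht₁⟩ := eventually_atTop.mp (hev.and (eventually_ge_atTop (0:ℝ)))
    set t₀ : ℝ := max t₁ 0 with ht₀def
    have ht₀0 : 0 ≤ t₀ := le_max_right _ _
    obtain ⟨t2, ht2def⟩ : ∃ t2 : ℝ, t2 = t₀ + (2 / c) * (sc.L / γ + 1) := ⟨_, rfl⟩
    have ht2ge : t₀ ≤ t2 := by
      have h9 : 0 ≤ (2 / c) * (sc.L / γ + 1) :=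
        mul_nonneg (by positivity) (by linarith)
      linarith
    have hint : (c / 2) * (t2 - t₀) ≤ ∫ u in t₀..t2, sc.I u := by
      have h1 : ∫ u in t₀..t2, (c/2 : ℝ) ≤ ∫ u in t₀..t2, sc.I u := by
        apply intervalIntegral.integral_mono_on ht2ge intervalIntegrable_const
          (sc.II_I ht₀0 (ht₀0.trans ht2ge))
        intro u hu
        exact (ht₁ u (le_trans (le_max_left _ _) hu.1)).1.le
      rw [intervalIntegral.integral_const, smul_eq_mul] at h1
      linarith
    have hsplit := split_primitive ht₀0 ht2ge (fun u v hu hv => sc.II_I hu hv)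
    have hP2 : sc.P t2 = sc.P t₀ + ∫ u in t₀..t2, sc.I u := hsplit
    have hPt₀ : 0 ≤ sc.P t₀ := sc.Pnonneg ht₀0
    have hgrow : (c / 2) * (t2 - t₀) = sc.L / γ + 1 := by
      have h8 : t2 - t₀ = (2 / c) * (sc.L / γ + 1) := by rw [ht2def]; ring
      rw [h8]
      have hc0 : c ≠ 0 := ne_of_gt hcpos
      field_simp
    have : sc.L / γ + 1 ≤ sc.P t2 := by
      rw [hP2]
      rw [hgrow] at hint
      linarith
    have := hP_le t2 (ht₀0.trans ht2ge)
    linarith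
  refine ⟨X, hX, hX0, hxle, ?_, ?_⟩
  · rw [hc] at hczero
    have hgl : γ * (sc.L / γ) = sc.L := by field_simp
    rw [hgl] at hczero
    linarith
  · rwa [hczero] at hIlim

end SIRScen
namespace SIRScen

variable {βq βn γ T I₀ : ℝ}

/-- a uIcc inside an Ioo -/
lemma uIcc_subset_Ioo' {a b l r : ℝ} (ha : a ∈ Ioo l r) (hb : b ∈ Ioo l r) :
    uIcc a b ⊆ Ioo l r := Set.ordConnected_Ioo.uIcc_subset ha hb

section One

variable (sc : SIRScen βq βn γ T I₀)

lemma q1_eq_P (hscτ : sc.τ = Icc 0 T) {t : ℝ} (ht : t ∈ Icc 0 T) : sc.q t = sc.P t := by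
  unfold q P
  apply intervalIntegral.integral_congr
  intro s hs
  rw [uIcc_of_le ht.1] at hs
  have : s ∈ sc.τ := by
    rw [hscτ]
    exact ⟨hs.1, hs.2.trans ht.2⟩
  exact indicator_of_mem this _

lemma q1_const (hscτ : sc.τ = Icc 0 T) {t : ℝ} (ht : T ≤ t) : sc.q t = sc.q T := by
  have hT0 : (0:ℝ) ≤ T := sc.hT.le
  have hsplit := split_primitive hT0 ht (fun u v hu hv => sc.II_indI hu hv)
  have hzero : (∫ s in T..t, sc.τ.indicator sc.I s) = 0 := by
    rw [intervalIntegral.integral_of_le ht]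
    have heq : EqOn (sc.τ.indicator sc.I) (fun _ => (0:ℝ)) (Ioc T t) := by
      intro s hs
      have : s ∉ sc.τ := by
        rw [hscτ]
        intro hmem
        exact absurd hmem.2 (not_le.mpr hs.1)
      exact indicator_of_notMem this _
    rw [setIntegral_congr_fun measurableSet_Ioc heq]
    simp
  show sc.q t = sc.q T
  unfold q
  rw [hsplit, hzero, add_zero]

lemma x1_eq (hscτ : sc.τ = Icc 0 T) {t : ℝ} (ht : t ∈ Icc 0 T) : sc.x t = βq * sc.P t := by
  rw [sc.x_eq ht.1, sc.q1_eq_P hscτ ht]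
  ring

lemma I1_eq (hscτ : sc.τ = Icc 0 T) {t : ℝ} (ht : t ∈ Icc 0 T) : sc.I t = Gf βq γ I₀ (sc.q t) := by
  have h1 := sc.sum_eq ht.1
  have h2 := sc.S_formula ht.1
  rw [sc.x1_eq hscτ ht] at h2
  have h4 := sc.q1_eq_P hscτ ht
  unfold Gf
  rw [h4, h1, h2]
  ring

end One

variable (sc : SIRScen βq βn γ T I₀)

lemma w_le_T {t : ℝ} (ht : 0 ≤ t) : sc.w t ≤ T := by
  unfold w
  rw [intervalIntegral.integral_of_le ht]
  rw [setIntegral_indicator sc.meas]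
  rw [setIntegral_const, smul_eq_mul, mul_one]
  have h1 : volume (Ioc 0 t ∩ sc.τ) ≤ ENNReal.ofReal T := by
    rw [← sc.hvol]
    exact measure_mono inter_subset_right
  have h2 := ENNReal.toReal_mono (by simp) h1
  rwa [ENNReal.toReal_ofReal sc.hT.le] at h2

/-- THE crossing lemma: the early-quarantine scenario accumulates weighted quarantine
mass at least as fast. -/
lemma crossing {sc1 : SIRScen βq βn γ T I₀} (h1τ : sc1.τ = Icc 0 T)
    (sc2 : SIRScen βq βn γ T I₀) {t₀ : ℝ} (ht₀ : 0 ≤ t₀) :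
    sc2.q t₀ ≤ sc1.q (sc2.w t₀) := by
  by_contra hgt
  push_neg at hgt
  set h : ℝ → ℝ := fun t => sc2.q t - sc1.q (sc2.w t) with hhdef
  have hht₀ : 0 < h t₀ := by show 0 < sc2.q t₀ - sc1.q (sc2.w t₀); linarith
  have hcont : ContinuousOn h (Ici 0) := by
    apply ContinuousOn.sub sc2.contq
    exact sc1.contq.comp sc2.contw (fun t ht => mem_Ici.mpr (sc2.wnonneg ht))
  set C : Set ℝ := Icc 0 t₀ ∩ h ⁻¹' (Iic 0) with hCdef
  have hCclosed : IsClosed C :=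
    (hcont.mono (Icc_subset_Ici_self)).preimage_isClosed_of_isClosed isClosed_Icc isClosed_Iic
  have h0C : (0:ℝ) ∈ C := by
    refine ⟨⟨le_rfl, ht₀⟩, ?_⟩
    simp only [mem_preimage, mem_Iic, hhdef]
    rw [sc2.q_zero, sc2.w_zero, sc1.q_zero]
    norm_num
  have hbdd : BddAbove C := (bddAbove_Icc).mono inter_subset_left
  set s := sSup C with hsdef
  have hsC : s ∈ C := hCclosed.csSup_mem ⟨0, h0C⟩ hbdd
  have hs0 : 0 ≤ s := hsC.1.1
  have hst₀ : s ≤ t₀ := hsC.1.2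
  have hhs : h s ≤ 0 := hsC.2
  have hslt : s < t₀ := lt_of_le_of_ne hst₀ (by intro he; rw [he] at hhs; linarith)
  have hpos_on : ∀ u ∈ Ioc s t₀, 0 < h u := by
    intro u hu
    by_contra hle
    push_neg at hle
    have huC : u ∈ C := ⟨⟨hs0.trans hu.1.le, hu.2⟩, hle⟩
    exact absurd (le_csSup hbdd huC) (not_le.mpr hu.1)
  -- derivative estimate off the breakpoints of `sc2`
  have hder : ∀ u ∈ Ioo s t₀, u ∉ sc2.D → ∃ h', HasDerivAt h h' u ∧ h' ≤ 0 := by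
    intro u hu huD
    have hu0 : 0 < u := lt_of_le_of_lt hs0 hu.1
    have hupos : 0 < h u := hpos_on u ⟨hu.1, hu.2.le⟩
    rcases sc2.loc huD with hmem | hmem
    · -- u is interior to the quarantine set of sc2
      obtain ⟨ε, hε, hball⟩ := Metric.mem_nhds_iff.mp hmem
      set δ : ℝ := min ε u with hδdef
      have hδpos : 0 < δ := lt_min hε hu0
      have hδu : δ ≤ u := min_le_right _ _
      have hsub : Ioo (u - δ) (u + δ) ⊆ sc2.τ := by
        refine subset_trans ?_ hball
        rw [Real.ball_eq_Ioo]
        have hδε : δ ≤ ε := min_le_left _ _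
        exact Ioo_subset_Ioo (by linarith) (by linarith)
      have humem : u ∈ Ioo (u - δ) (u + δ) := ⟨by linarith, by linarith⟩
      have hV : Ioo (u - δ) (u + δ) ∈ 𝓝 u := isOpen_Ioo.mem_nhds humem
      -- w is affine on the ball
      have hw_aff : ∀ v ∈ Ioo (u - δ) (u + δ), sc2.w v = sc2.w u + (v - u) := by
        intro v hv
        have hv0 : 0 ≤ v := by have := hv.1; linarith
        have hadj : sc2.w u + (∫ y in u..v, sc2.τ.indicator (fun _ => (1:ℝ)) y) = sc2.w v :=
          intervalIntegral.integral_add_adjacent_intervals sc2.II_ind1 sc2.II_ind1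
        have hone : (∫ y in u..v, sc2.τ.indicator (fun _ => (1:ℝ)) y) = ∫ y in u..v, (1:ℝ) := by
          apply intervalIntegral.integral_congr
          intro y hy
          exact indicator_of_mem (hsub (uIcc_subset_Ioo' humem hv hy)) _
        rw [hone] at hadj
        simp only [intervalIntegral.integral_const, smul_eq_mul, mul_one] at hadj
        linarith [hadj]
      have hw_deriv : HasDerivAt sc2.w 1 u := by
        have haff : HasDerivAt (fun v => sc2.w u + (v - u)) 1 u := by
          simpa using ((hasDerivAt_id u).sub_const u).const_add (sc2.w u)
        refine haff.congr_of_eventuallyEq ?_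
        filter_upwards [hV] with v hv
        exact hw_aff v hv
      -- q2 has derivative I2 at u
      have hq2_deriv : HasDerivAt sc2.q (sc2.I u) u := by
        have hFT : HasDerivAt (fun v => sc2.q u + ∫ y in u..v, sc2.I y) (sc2.I u) u := by
          refine HasDerivAt.const_add _ ?_
          exact intervalIntegral.integral_hasDerivAt_right
            (sc2.II_I hu0.le hu0.le) (smaf_of_contOn sc2.contI hu0) (sc2.contAtI hu0)
        refine hFT.congr_of_eventuallyEq ?_
        filter_upwards [hV] with v hv
        have hv0 : 0 ≤ v := by have := hv.1; linarith
        have hadj : sc2.q u + (∫ y in u..v, sc2.τ.indicator sc2.I y) = sc2.q v :=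
          intervalIntegral.integral_add_adjacent_intervals
            (sc2.II_indI le_rfl hu0.le) (sc2.II_indI hu0.le hv0)
        have hind : (∫ y in u..v, sc2.τ.indicator sc2.I y) = ∫ y in u..v, sc2.I y := by
          apply intervalIntegral.integral_congr
          intro y hy
          exact indicator_of_mem (hsub (uIcc_subset_Ioo' humem hv hy)) _
        rw [hind] at hadj
        linarith [hadj]
      -- the value w u lies in (0, T)
      have hwu_pos : 0 < sc2.w u := by
        have hv : u - δ/2 ∈ Ioo (u - δ) (u + δ) := ⟨by linarith, by linarith⟩
        have := hw_aff _ hv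
        have hnn := sc2.wnonneg (by linarith : (0:ℝ) ≤ u - δ/2)
        linarith
      have hwu_lt : sc2.w u < T := by
        have hv : u + δ/2 ∈ Ioo (u - δ) (u + δ) := ⟨by linarith, by linarith⟩
        have := hw_aff _ hv
        have hle := sc2.w_le_T (by linarith : (0:ℝ) ≤ u + δ/2)
        linarith
      -- q1 has derivative I1 at w u
      have hq1_deriv : HasDerivAt sc1.q (sc1.I (sc2.w u)) (sc2.w u) := by
        have hP1 := sc1.derivP hwu_pos
        refine (hP1.congr_of_eventuallyEq ?_).congr_deriv rfl
        filter_upwards [isOpen_Ioo.mem_nhds (⟨hwu_pos, hwu_lt⟩ : sc2.w u ∈ Ioo 0 T)] with v hv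
        exact sc1.q1_eq_P h1τ ⟨hv.1.le, hv.2.le⟩
      have hcomp : HasDerivAt (fun t => sc1.q (sc2.w t)) (sc1.I (sc2.w u) * 1) u := by
        have := HasDerivAt.comp u hq1_deriv hw_deriv
        exact this
      refine ⟨sc2.I u - sc1.I (sc2.w u) * 1, ?_, ?_⟩
      · exact hq2_deriv.sub hcomp
      · rw [mul_one]
        have hIle := sc2.Ile hu0.le
        have hI1eq := sc1.I1_eq h1τ (⟨hwu_pos.le, hwu_lt.le⟩ : sc2.w u ∈ Icc 0 T)
        have hq1q2 : sc1.q (sc2.w u) ≤ sc2.q u := by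
          have : 0 < sc2.q u - sc1.q (sc2.w u) := hupos
          linarith
        have hGf : Gf βq γ I₀ (sc2.q u) ≤ Gf βq γ I₀ (sc1.q (sc2.w u)) :=
          Gf_anti sc2.hβq sc2.hβ sc2.hsub sc2.hI₀ (sc1.qnonneg hwu_pos.le) hq1q2
        rw [hI1eq]
        linarith
    · -- u is in the complement of the quarantine set of sc2
      obtain ⟨ε, hε, hball⟩ := Metric.mem_nhds_iff.mp hmem
      set δ : ℝ := min ε u with hδdef
      have hδpos : 0 < δ := lt_min hε hu0
      have hδu : δ ≤ u := min_le_right _ _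
      have hsub : Ioo (u - δ) (u + δ) ⊆ sc2.τᶜ := by
        refine subset_trans ?_ hball
        rw [Real.ball_eq_Ioo]
        have hδε : δ ≤ ε := min_le_left _ _
        exact Ioo_subset_Ioo (by linarith) (by linarith)
      have humem : u ∈ Ioo (u - δ) (u + δ) := ⟨by linarith, by linarith⟩
      have hV : Ioo (u - δ) (u + δ) ∈ 𝓝 u := isOpen_Ioo.mem_nhds humem
      have hw_const : ∀ v ∈ Ioo (u - δ) (u + δ), sc2.w v = sc2.w u := by
        intro v hv
        have hv0 : 0 ≤ v := by have := hv.1; linarith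
        have hadj : sc2.w u + (∫ y in u..v, sc2.τ.indicator (fun _ => (1:ℝ)) y) = sc2.w v :=
          intervalIntegral.integral_add_adjacent_intervals sc2.II_ind1 sc2.II_ind1
        have hzero : (∫ y in u..v, sc2.τ.indicator (fun _ => (1:ℝ)) y) = ∫ y in u..v, (0:ℝ) := by
          apply intervalIntegral.integral_congr
          intro y hy
          exact indicator_of_notMem (hsub (uIcc_subset_Ioo' humem hv hy)) _
        rw [hzero] at hadj
        simp only [intervalIntegral.integral_zero] at hadj
        linarith [hadj]
      have hq_const : ∀ v ∈ Ioo (u - δ) (u + δ), sc2.q v = sc2.q u := by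
        intro v hv
        have hv0 : 0 ≤ v := by have := hv.1; linarith
        have hadj : sc2.q u + (∫ y in u..v, sc2.τ.indicator sc2.I y) = sc2.q v :=
          intervalIntegral.integral_add_adjacent_intervals
            (sc2.II_indI le_rfl hu0.le) (sc2.II_indI hu0.le hv0)
        have hzero : (∫ y in u..v, sc2.τ.indicator sc2.I y) = ∫ y in u..v, (0:ℝ) := by
          apply intervalIntegral.integral_congr
          intro y hy
          exact indicator_of_notMem (hsub (uIcc_subset_Ioo' humem hv hy)) _
        rw [hzero] at hadj
        simp only [intervalIntegral.integral_zero] at hadj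
        linarith [hadj]
      refine ⟨0, ?_, le_rfl⟩
      have hconst : HasDerivAt (fun _ : ℝ => sc2.q u - sc1.q (sc2.w u)) 0 u := hasDerivAt_const _ _
      refine hconst.congr_of_eventuallyEq ?_
      filter_upwards [hV] with v hv
      simp only [hhdef]
      rw [hq_const v hv, hw_const v hv]
  have hfinal : h t₀ ≤ h s :=
    glue_antitone sc2.D hst₀ (hcont.mono (fun u hu => hs0.trans hu.1))
      (fun u hu huD => hder u ⟨hu.1, hu.2⟩ huD)
  linarith

lemma q_le_ell {sc1 : SIRScen βq βn γ T I₀} (h1τ : sc1.τ = Icc 0 T)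
    (sc2 : SIRScen βq βn γ T I₀) {t : ℝ} (ht : 0 ≤ t) :
    sc2.q t ≤ sc1.q T := by
  refine (crossing h1τ sc2 ht).trans ?_
  exact sc1.qmono (mem_Ici.mpr (sc2.wnonneg ht)) (mem_Ici.mpr sc1.hT.le) (sc2.w_le_T ht)

end SIRScen
/-- the lower envelope curve in the `x` variable -/
def Lam (βq βn γ I₀ ell : ℝ) (x : ℝ) : ℝ :=
  I₀ + (1 - I₀) * (1 - Real.exp (-x)) - (γ/βn) * x - (γ*(βn-βq)/βn) * min (x/βq) ell

lemma Lam_continuous (βq βn γ I₀ ell : ℝ) : Continuous (Lam βq βn γ I₀ ell) := by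
  unfold Lam
  have h1 : Continuous fun x : ℝ => Real.exp (-x) := Real.continuous_exp.comp continuous_neg
  fun_prop

lemma Lam_strictAnti {βq βn γ I₀ ell : ℝ} (hβq : 0 < βq) (hβ : βq < βn) (hsub : βn ≤ γ)
    (hI₀ : I₀ ∈ Ioo (0:ℝ) 1) {u v : ℝ} (hu : 0 ≤ u) (huv : u < v) :
    Lam βq βn γ I₀ ell v < Lam βq βn γ I₀ ell u := by
  have hβn : 0 < βn := hβq.trans hβ
  have h1 : Real.exp (-u) - Real.exp (-v) ≤ v - u := exp_sub_exp_le hu huv.le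
  have h2 : min (u/βq) ell ≤ min (v/βq) ell :=
    min_le_min ((div_le_div_iff_of_pos_right hβq).mpr huv.le) le_rfl
  have h3 : 1 ≤ γ / βn := (one_le_div hβn).mpr hsub
  have h4 : 0 < γ * (βn - βq) / βn := by
    have hg : 0 < γ := by linarith
    exact div_pos (mul_pos hg (by linarith)) hβn
  have hI1 : I₀ < 1 := hI₀.2
  have hI0 : 0 < I₀ := hI₀.1
  have h5 : Real.exp (-v) ≤ Real.exp (-u) := Real.exp_le_exp.mpr (by linarith)
  unfold Lam
  nlinarith [mul_le_mul_of_nonneg_left h2 h4.le]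

namespace SIRScen

variable {βq βn γ T I₀ : ℝ} (sc : SIRScen βq βn γ T I₀)

lemma I_lam_eq {t : ℝ} (ht : 0 ≤ t) :
    sc.I t = I₀ + (1 - I₀) * (1 - Real.exp (-(sc.x t))) - (γ/βn) * sc.x t
      - (γ*(βn-βq)/βn) * sc.q t := by
  have hβn : (0:ℝ) < βn := sc.hβq.trans sc.hβ
  have hP : βn * sc.P t = sc.x t + (βn - βq) * sc.q t := by
    rw [sc.x_eq ht]; ring
  have h2 : γ * sc.P t = (γ/βn) * sc.x t + (γ*(βn-βq)/βn) * sc.q t := by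
    have hPt : sc.P t = (sc.x t + (βn - βq) * sc.q t) / βn := by
      field_simp
      linarith [hP]
    rw [hPt]
    field_simp
  have h1 := sc.sum_eq ht
  have h3 := sc.S_formula ht
  rw [h1, h3, h2]
  ring

lemma q1_min (hscτ : sc.τ = Icc 0 T) {t : ℝ} (ht : 0 ≤ t) :
    sc.q t = min (sc.x t / βq) (sc.q T) := by
  have hβq := sc.hβq
  have hT0 : (0:ℝ) ≤ T := sc.hT.le
  rcases le_or_gt t T with hcase | hcase
  · have hmem : t ∈ Icc 0 T := ⟨ht, hcase⟩
    have h1 : sc.x t = βq * sc.P t := sc.x1_eq hscτ hmem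
    have h2 : sc.q t = sc.P t := sc.q1_eq_P hscτ hmem
    have h3 : sc.x t / βq = sc.q t := by rw [h1, h2]; field_simp
    have h4 : sc.q t ≤ sc.q T := sc.qmono (mem_Ici.mpr ht) (mem_Ici.mpr hT0) hcase
    rw [h3, min_eq_left h4]
  · have h1 : sc.q t = sc.q T := sc.q1_const hscτ hcase.le
    have hxT : sc.x T = βq * sc.P T := sc.x1_eq hscτ ⟨hT0, le_rfl⟩
    have hqT : sc.q T = sc.P T := sc.q1_eq_P hscτ ⟨hT0, le_rfl⟩
    have hxmono : sc.x T ≤ sc.x t := sc.xmono (mem_Ici.mpr hT0) (mem_Ici.mpr ht) hcase.le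
    have h5 : sc.q T ≤ sc.x t / βq := by
      rw [le_div_iff₀ hβq]
      rw [hqT]
      nlinarith [hxT, hxmono]
    rw [h1, min_eq_right h5]

lemma I1_lam (hscτ : sc.τ = Icc 0 T) {t : ℝ} (ht : 0 ≤ t) :
    sc.I t = Lam βq βn γ I₀ (sc.q T) (sc.x t) := by
  rw [sc.I_lam_eq ht]
  unfold Lam
  rw [← sc.q1_min hscτ ht]

lemma I2_lam {sc1 : SIRScen βq βn γ T I₀} (h1τ : sc1.τ = Icc 0 T)
    {t : ℝ} (ht : 0 ≤ t) :
    Lam βq βn γ I₀ (sc1.q T) (sc.x t) ≤ sc.I t := by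
  have hβq := sc.hβq
  have hβn : (0:ℝ) < βn := sc.hβq.trans sc.hβ
  have hcoef : 0 < γ * (βn - βq) / βn :=
    div_pos (mul_pos sc.hγ (by linarith [sc.hβ])) hβn
  have hq_min : sc.q t ≤ min (sc.x t / βq) (sc1.q T) := by
    refine le_min ?_ (q_le_ell h1τ sc ht)
    rw [le_div_iff₀ hβq]
    nlinarith [sc.x_ge_q ht]
  rw [sc.I_lam_eq ht]
  unfold Lam
  nlinarith [mul_le_mul_of_nonneg_left hq_min hcoef.le]

end SIRScen

/-- if `βₙ ≤ γ`, then the interval `[0, T]` minimizes `R^τ(∞)` over `𝒯`. -/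
theorem initial_interval_minimizes_of_subcritical
    (βq βn γ T I₀ : ℝ) (hβq : 0 < βq) (hβ : βq < βn) (hγ : 0 < γ) (hT : 0 < T)
    (hI₀ : I₀ ∈ Ioo (0 : ℝ) 1) (hsub : βn ≤ γ)
    (S I R : ℝ → ℝ) (hsol : IsSIRFull (betaFun βq βn (Icc 0 T)) γ S I R)
    (hS0 : S 0 = 1 - I₀) (hI0 : I 0 = I₀) (hR0 : R 0 = 0)
    (L : ℝ) (hL : Tendsto R atTop (𝓝 L)) :
    ∀ σ : Set ℝ, MemTau T σ →
      ∀ S' I' R' : ℝ → ℝ, IsSIRFull (betaFun βq βn σ) γ S' I' R' →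
        S' 0 = 1 - I₀ → I' 0 = I₀ → R' 0 = 0 →
        ∀ L' : ℝ, Tendsto R' atTop (𝓝 L') → L ≤ L' := by
  intro σ hσ S' I' R' hsol' hS0' hI0' hR0' L' hL'
  obtain ⟨hσsub, ⟨n, a, b, hab, hστ⟩, hσvol⟩ := hσ
  set sc1 : SIRScen βq βn γ T I₀ :=
    { hβq := hβq, hβ := hβ, hγ := hγ, hT := hT, hI₀ := hI₀, hsub := hsub
      τ := Icc 0 T, nn := 1, fa := fun _ => 0, fb := fun _ => T
      hab := fun _ => hT.le
      hτ := (Set.iUnion_const _).symm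
      hvol := by rw [Real.volume_Icc, sub_zero]
      S := S, I := I, R := R, hsol := hsol, hS0 := hS0, hI0 := hI0, hR0 := hR0
      L := L, hL := hL } with hsc1
  set sc2 : SIRScen βq βn γ T I₀ :=
    { hβq := hβq, hβ := hβ, hγ := hγ, hT := hT, hI₀ := hI₀, hsub := hsub
      τ := σ, nn := n, fa := a, fb := b
      hab := hab, hτ := hστ, hvol := hσvol
      S := S', I := I', R := R', hsol := hsol', hS0 := hS0', hI0 := hI0', hR0 := hR0'
      L := L', hL := hL' } with hsc2
  have h1τ : sc1.τ = Icc 0 T := rfl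
  obtain ⟨X1, hX1, hX10, hx1le, hL1, hI1lim⟩ := sc1.limits
  obtain ⟨X2, hX2, hX20, hx2le, hL2, hI2lim⟩ := sc2.limits
  set ell : ℝ := sc1.q T with hell
  have hΛc : Continuous (Lam βq βn γ I₀ ell) := Lam_continuous βq βn γ I₀ ell
  -- the limit of Λ along x₁ is 0
  have hΛX1 : Lam βq βn γ I₀ ell X1 = 0 := by
    have ht1 : Tendsto (fun t => Lam βq βn γ I₀ ell (sc1.x t)) atTop
        (𝓝 (Lam βq βn γ I₀ ell X1)) := (hΛc.tendsto X1).comp hX1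
    have heq : Tendsto sc1.I atTop (𝓝 (Lam βq βn γ I₀ ell X1)) := by
      refine ht1.congr' ?_
      filter_upwards [eventually_ge_atTop (0:ℝ)] with t ht
      exact (sc1.I1_lam h1τ ht).symm
    exact tendsto_nhds_unique heq hI1lim
  -- the limit of Λ along x₂ is ≤ 0
  have hΛX2 : Lam βq βn γ I₀ ell X2 ≤ 0 := by
    have ht2 : Tendsto (fun t => Lam βq βn γ I₀ ell (sc2.x t)) atTop
        (𝓝 (Lam βq βn γ I₀ ell X2)) := (hΛc.tendsto X2).comp hX2
    refine le_of_tendsto_of_tendsto ht2 hI2lim ?_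
    filter_upwards [eventually_ge_atTop (0:ℝ)] with t ht
    exact sc2.I2_lam h1τ ht
  -- hence X1 ≤ X2
  have hX12 : X1 ≤ X2 := by
    by_contra hlt
    push_neg at hlt
    have := Lam_strictAnti (ell := ell) hβq hβ hsub hI₀ hX20 hlt
    rw [hΛX1] at this
    linarith
  -- conclude
  have hexp : Real.exp (-X2) ≤ Real.exp (-X1) := Real.exp_le_exp.mpr (by linarith)
  have hsc1L : sc1.L = L := rfl
  have hsc2L : sc2.L = L' := rfl
  rw [hsc1L] at hL1
  rw [hsc2L] at hL2
  rw [hL1, hL2]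
  nlinarith [hI₀.2]
end
end

section
/- Let β, γ > 0 be constants and let (S, I) solve ∂_t S = −β S I, ∂_t I = β S I − γ I on [0,∞) with S(0) = S₀ ∈ (0,1), I(0) = I₀ ∈ (0,1), S₀ + I₀ ≤ 1. Then the limit S(∞) = lim_{t→∞} S(t) exists, I(t) → 0 as t → ∞, S(∞) ∈ (0, γ/β), and S(∞) satisfies the transcendental equation S(∞) − (γ/β) log S(∞) = S₀ + I₀ − (γ/β) log S₀. -/
open Set Filter MeasureTheory Topology Asymptotics
open scoped Classical

noncomputable section

lemma const_of_derivWithin_zero' {g : ℝ → ℝ}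
    (hgc : ContinuousOn g (Ici 0))
    (hg : ∀ t ∈ Ici (0:ℝ), HasDerivWithinAt g 0 (Ici t) t) :
    ∀ t ∈ Ici (0:ℝ), g t = g 0 := by
  intro t ht
  exact constant_of_has_deriv_right_zero (hgc.mono Icc_subset_Ici_self)
    (fun x hx => hg x hx.1) t ⟨ht, le_rfl⟩

lemma exp_rep {c f : ℝ → ℝ} (hc : ContinuousOn c (Ici 0))
    (hf : ∀ t ∈ Ici (0:ℝ), HasDerivWithinAt f (c t * f t) (Ici 0) t) :
    ∀ b ∈ Ici (0:ℝ), f b = f 0 * Real.exp (∫ s in (0:ℝ)..b, c s) := by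
  have hfc : ContinuousOn f (Ici 0) := fun t ht => (hf t ht).continuousWithinAt
  set F : ℝ → ℝ := fun t => ∫ s in (0:ℝ)..t, c s with hFdef
  have hFd : ∀ x ∈ Ici (0:ℝ), HasDerivWithinAt F (c x) (Ici x) x := by
    intro x hx
    have hsub : Ioi x ⊆ Ici (0:ℝ) := fun y hy => mem_Ici.2 (le_trans (mem_Ici.1 hx) (le_of_lt (mem_Ioi.1 hy)))
    have hint : IntervalIntegrable c volume 0 x := by
      apply ContinuousOn.intervalIntegrable
      rw [uIcc_of_le hx]
      exact hc.mono Icc_subset_Ici_self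
    have hmeas : StronglyMeasurableAtFilter c (𝓝[>] x) volume :=
      ⟨Ici 0, mem_of_superset self_mem_nhdsWithin hsub,
        hc.aestronglyMeasurable measurableSet_Ici⟩
    exact intervalIntegral.integral_hasDerivWithinAt_right hint hmeas
      ((hc x hx).mono hsub)
  have hFcont : ContinuousOn F (Ici 0) := by
    intro x hx
    have h1 : ContinuousOn F (Icc 0 (x+1)) := by
      have := intervalIntegral.continuousOn_primitive_interval
        (a := (0:ℝ)) (b := x+1) (μ := volume) (f := c) ?_
      · rwa [uIcc_of_le (by linarith [mem_Ici.1 hx] : (0:ℝ) ≤ x+1)] at this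
      · rw [uIcc_of_le (by linarith [mem_Ici.1 hx] : (0:ℝ) ≤ x+1)]
        exact (hc.mono Icc_subset_Ici_self).integrableOn_compact isCompact_Icc
    have hmem : Icc (0:ℝ) (x+1) ∈ 𝓝[Ici 0] x := by
      rw [← Ici_inter_Iic]
      exact inter_mem self_mem_nhdsWithin
        (mem_nhdsWithin_of_mem_nhds (Iic_mem_nhds (lt_add_one x)))
    exact (h1 x ⟨hx, le_of_lt (lt_add_one x)⟩).mono_of_mem_nhdsWithin hmem
  intro b hb
  have hg : ∀ t ∈ Ici (0:ℝ),
      HasDerivWithinAt (fun t => f t * Real.exp (-F t)) 0 (Ici t) t := by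
    intro x hx
    have hE : HasDerivWithinAt (fun t => Real.exp (-F t))
        (Real.exp (-F x) * -c x) (Ici x) x := (hFd x hx).neg.exp
    have := ((hf x hx).mono (Ici_subset_Ici.2 hx)).fun_mul hE
    refine this.congr_deriv ?_
    ring
  have hgc : ContinuousOn (fun t => f t * Real.exp (-F t)) (Ici 0) :=
    hfc.mul (Real.continuous_exp.comp_continuousOn hFcont.neg)
  have hconst := const_of_derivWithin_zero' hgc hg b hb
  have hF0 : F 0 = 0 := intervalIntegral.integral_same
  rw [hF0, neg_zero, Real.exp_zero, mul_one] at hconst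
  have := congrArg (fun y => y * Real.exp (F b)) hconst
  simpa [mul_assoc, ← Real.exp_add] using this

/-- for the SIR system with constant rates `β, γ > 0` on `[0, ∞)` with
`S(0) = S₀ ∈ (0,1)`, `I(0) = I₀ ∈ (0,1)`, `S₀ + I₀ ≤ 1`, the limit `S(∞)` exists,
`I(t) → 0`, `S(∞) ∈ (0, γ/β)`, and `S(∞) - (γ/β) log S(∞) = S₀ + I₀ - (γ/β) log S₀`. -/
theorem constant_rate_limit
    (β γ : ℝ) (hβ : 0 < β) (hγ : 0 < γ) (S₀ I₀ : ℝ)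
    (hS₀ : S₀ ∈ Ioo (0 : ℝ) 1) (hI₀ : I₀ ∈ Ioo (0 : ℝ) 1) (hsum : S₀ + I₀ ≤ 1)
    (S I : ℝ → ℝ)
    (hS : ∀ t ∈ Ici (0 : ℝ), HasDerivWithinAt S (-(β * S t * I t)) (Ici 0) t)
    (hI : ∀ t ∈ Ici (0 : ℝ), HasDerivWithinAt I (β * S t * I t - γ * I t) (Ici 0) t)
    (hS0 : S 0 = S₀) (hI0 : I 0 = I₀) :
    ∃ Sinf : ℝ, Tendsto S atTop (𝓝 Sinf) ∧ Tendsto I atTop (𝓝 0) ∧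
      Sinf ∈ Ioo 0 (γ / β) ∧
      Sinf - γ / β * Real.log Sinf = S₀ + I₀ - γ / β * Real.log S₀ := by
  have hScont : ContinuousOn S (Ici 0) := fun t ht => (hS t ht).continuousWithinAt
  have hIcont : ContinuousOn I (Ici 0) := fun t ht => (hI t ht).continuousWithinAt
  -- positivity
  have hSpos : ∀ t ∈ Ici (0:ℝ), 0 < S t := by
    have hrep := exp_rep (c := fun t => -(β * I t)) (f := S)
      ((continuousOn_const.mul hIcont).neg)
      (fun t ht => by convert hS t ht using 1; ring)
    intro t ht
    rw [hrep t ht, hS0]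
    exact mul_pos hS₀.1 (Real.exp_pos _)
  have hIpos : ∀ t ∈ Ici (0:ℝ), 0 < I t := by
    have hrep := exp_rep (c := fun t => β * S t - γ) (f := I)
      ((continuousOn_const.mul hScont).sub continuousOn_const)
      (fun t ht => by convert hI t ht using 1; ring)
    intro t ht
    rw [hrep t ht, hI0]
    exact mul_pos hI₀.1 (Real.exp_pos _)
  -- the function W = S + I
  set W : ℝ → ℝ := fun t => S t + I t with hWdef
  have hW : ∀ t ∈ Ici (0:ℝ), HasDerivWithinAt W (-(γ * I t)) (Ici 0) t := by
    intro t ht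
    have := (hS t ht).fun_add (hI t ht)
    refine this.congr_deriv ?_
    ring
  have hWcont : ContinuousOn W (Ici 0) := hScont.add hIcont
  -- the conserved quantity
  set H : ℝ → ℝ := fun t => S t + I t - γ/β * Real.log (S t) with hHdef
  have hH : ∀ t ∈ Ici (0:ℝ), HasDerivWithinAt H 0 (Ici 0) t := by
    intro t ht
    have hSne : S t ≠ 0 := ne_of_gt (hSpos t ht)
    have hlog : HasDerivWithinAt (fun u => Real.log (S u))
        (-(β * S t * I t) / S t) (Ici 0) t := (hS t ht).log hSne
    have := ((hS t ht).fun_add (hI t ht)).fun_sub (hlog.const_mul (γ/β))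
    refine this.congr_deriv ?_
    field_simp
    ring
  have hHcont : ContinuousOn H (Ici 0) :=
    (hScont.add hIcont).sub (continuousOn_const.mul
      (hScont.log (fun t ht => ne_of_gt (hSpos t ht))))
  have hHc : ∀ t ∈ Ici (0:ℝ), H t = H 0 :=
    const_of_derivWithin_zero' hHcont
      (fun t ht => (hH t ht).mono (Ici_subset_Ici.2 ht))
  -- lower bound on S
  set c₀ : ℝ := Real.exp (-(β/γ) * H 0) with hc₀def
  have hSlb : ∀ t ∈ Ici (0:ℝ), c₀ ≤ S t := by
    intro t ht
    have h1 : γ/β * Real.log (S t) = S t + I t - H 0 := by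
      have := hHc t ht
      simp only [hHdef] at this
      linarith
    have h2 : -(β/γ) * H 0 ≤ Real.log (S t) := by
      have hgb : 0 < γ/β := div_pos hγ hβ
      have h3 : -H 0 ≤ γ/β * Real.log (S t) := by
        rw [h1]; linarith [(hSpos t ht).le, (hIpos t ht).le]
      have h4 : -H 0 / (γ/β) ≤ Real.log (S t) :=
        (div_le_iff₀ hgb).2 (by linarith [mul_comm (γ/β) (Real.log (S t))])
      have h5 : -H 0 / (γ/β) = -(β/γ) * H 0 := by
        field_simp
      linarith
    calc c₀ ≤ Real.exp (Real.log (S t)) := Real.exp_le_exp.2 h2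
      _ = S t := Real.exp_log (hSpos t ht)
  -- antitonicity of S and W
  have hSanti : AntitoneOn S (Ici 0) := by
    apply antitoneOn_of_deriv_nonpos (convex_Ici 0) hScont
    · intro x hx
      simp only [interior_Ici, mem_Ioi] at hx
      exact ((hS x (le_of_lt hx)).hasDerivAt
        (Ici_mem_nhds hx)).differentiableAt.differentiableWithinAt
    · intro x hx
      simp only [interior_Ici, mem_Ioi] at hx
      rw [((hS x (le_of_lt hx)).hasDerivAt (Ici_mem_nhds hx)).deriv]
      have h1 := hSpos x (le_of_lt hx)
      have h2 := hIpos x (le_of_lt hx)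
      nlinarith [mul_pos (mul_pos hβ h1) h2]
  have hWanti : AntitoneOn W (Ici 0) := by
    apply antitoneOn_of_deriv_nonpos (convex_Ici 0) hWcont
    · intro x hx
      simp only [interior_Ici, mem_Ioi] at hx
      exact ((hW x (le_of_lt hx)).hasDerivAt
        (Ici_mem_nhds hx)).differentiableAt.differentiableWithinAt
    · intro x hx
      simp only [interior_Ici, mem_Ioi] at hx
      rw [((hW x (le_of_lt hx)).hasDerivAt (Ici_mem_nhds hx)).deriv]
      have h2 := hIpos x (le_of_lt hx)
      nlinarith [mul_pos hγ h2]
  -- limits of S and W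
  set Sm : ℝ → ℝ := fun t => S (max t 0) with hSmdef
  have hSmAnti : Antitone Sm := fun s t hst =>
    hSanti (le_max_right s 0) (le_max_right t 0) (max_le_max hst le_rfl)
  have hSmBdd : BddBelow (range Sm) := by
    refine ⟨c₀, ?_⟩
    rintro _ ⟨t, rfl⟩
    exact hSlb _ (le_max_right t 0)
  set B : ℝ := ⨅ t, Sm t with hBdef
  have hSB : Tendsto S atTop (𝓝 B) := by
    apply (tendsto_atTop_ciInf hSmAnti hSmBdd).congr'
    filter_upwards [eventually_ge_atTop (0:ℝ)] with t ht
    show S (max t 0) = S t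
    rw [max_eq_left ht]
  set Wm : ℝ → ℝ := fun t => W (max t 0) with hWmdef
  have hWmAnti : Antitone Wm := fun s t hst =>
    hWanti (le_max_right s 0) (le_max_right t 0) (max_le_max hst le_rfl)
  have hWmBdd : BddBelow (range Wm) := by
    refine ⟨0, ?_⟩
    rintro _ ⟨t, rfl⟩
    have h1 := hSpos _ (le_max_right t 0)
    have h2 := hIpos _ (le_max_right t 0)
    show (0:ℝ) ≤ S (max t 0) + I (max t 0)
    linarith
  set A : ℝ := ⨅ t, Wm t with hAdef
  have hWA : Tendsto W atTop (𝓝 A) := by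
    apply (tendsto_atTop_ciInf hWmAnti hWmBdd).congr'
    filter_upwards [eventually_ge_atTop (0:ℝ)] with t ht
    show W (max t 0) = W t
    rw [max_eq_left ht]
  have hIL : Tendsto I atTop (𝓝 (A - B)) := by
    apply (hWA.sub hSB).congr
    intro t
    simp [hWdef]
  -- FTC for W
  have hWint : ∀ t ∈ Ici (0:ℝ), γ * ∫ s in (0:ℝ)..t, I s = W 0 - W t := by
    intro t ht
    have h1 : ∫ s in (0:ℝ)..t, -(γ * I s) = W t - W 0 := by
      apply intervalIntegral.integral_eq_sub_of_hasDeriv_right_of_le ht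
        (hWcont.mono (Icc_subset_Ici_self))
      · intro x hx
        exact (hW x (le_of_lt hx.1)).mono
          (fun y hy => le_trans (le_of_lt hx.1) (le_of_lt hy))
      · apply ContinuousOn.intervalIntegrable
        rw [uIcc_of_le ht]
        exact ((continuousOn_const.mul hIcont).neg).mono Icc_subset_Ici_self
    have h2 : ∫ s in (0:ℝ)..t, -(γ * I s) = -(γ * ∫ s in (0:ℝ)..t, I s) := by
      rw [intervalIntegral.integral_neg, intervalIntegral.integral_const_mul]
    linarith
  -- I tends to 0
  have hLeq : A - B = 0 := by
    have hL0 : 0 ≤ A - B := by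
      apply ge_of_tendsto hIL
      filter_upwards [eventually_ge_atTop (0:ℝ)] with t ht using (hIpos t ht).le
    rcases eq_or_lt_of_le hL0 with h | hL
    · exact h.symm
    exfalso
    set L2 : ℝ := (A - B)/2 with hL2def
    have hk : 0 < L2 := by simp only [hL2def]; linarith
    obtain ⟨t₀, ht₀⟩ := (eventually_atTop).1
      ((hIL.eventually (eventually_gt_nhds (by linarith : L2 < A - B))).and
        (eventually_ge_atTop (0:ℝ)))
    have ht₀0 : (0:ℝ) ≤ t₀ := (ht₀ t₀ le_rfl).2
    have hW0 : 0 < W 0 := by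
      have := hSpos 0 Set.self_mem_Ici; have := hIpos 0 Set.self_mem_Ici
      simp only [hWdef]; linarith
    set t1 : ℝ := t₀ + (W 0 / γ + 1)/L2 with ht1def
    have ht1 : t₀ ≤ t1 := by
      have : 0 ≤ (W 0 / γ + 1)/L2 := by positivity
      simp only [ht1def]; linarith
    have ht10 : (0:ℝ) ≤ t1 := le_trans ht₀0 ht1
    have hIi1 : IntervalIntegrable I volume 0 t₀ := by
      apply ContinuousOn.intervalIntegrable
      rw [uIcc_of_le ht₀0]
      exact hIcont.mono Icc_subset_Ici_self
    have hIi2 : IntervalIntegrable I volume t₀ t1 := by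
      apply ContinuousOn.intervalIntegrable
      rw [uIcc_of_le ht1]
      exact hIcont.mono (fun y hy => le_trans ht₀0 hy.1)
    have hsplit : ∫ s in (0:ℝ)..t1, I s
        = (∫ s in (0:ℝ)..t₀, I s) + ∫ s in t₀..t1, I s :=
      (intervalIntegral.integral_add_adjacent_intervals hIi1 hIi2).symm
    have hlow1 : 0 ≤ ∫ s in (0:ℝ)..t₀, I s :=
      intervalIntegral.integral_nonneg ht₀0 (fun u hu => (hIpos u hu.1).le)
    have hlow2 : L2 * (t1 - t₀) ≤ ∫ s in t₀..t1, I s := by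
      have := intervalIntegral.integral_mono_on ht1
        (intervalIntegrable_const (c := L2)) hIi2
        (fun u hu => ((ht₀ u hu.1).1).le)
      rwa [intervalIntegral.integral_const, smul_eq_mul, mul_comm] at this
    have hWt1 : 0 < W t1 := by
      have := hSpos t1 ht10
      have := hIpos t1 ht10
      simp only [hWdef]; linarith
    have hcalc : L2 * (t1 - t₀) = W 0/γ + 1 := by
      have hd : t1 - t₀ = (W 0 / γ + 1)/L2 := by
        simp only [ht1def]; ring
      rw [hd, mul_div_cancel₀ _ (ne_of_gt hk)]
    have hfin : γ * ∫ s in (0:ℝ)..t1, I s ≥ γ * (W 0/γ + 1) := by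
      apply mul_le_mul_of_nonneg_left _ hγ.le
      rw [hsplit, ← hcalc]
      linarith
    have hgg : γ * (W 0/γ + 1) = W 0 + γ := by field_simp
    have hchain : W 0 + γ ≤ W 0 - W t1 := by
      calc W 0 + γ = γ * (W 0/γ + 1) := hgg.symm
        _ ≤ γ * ∫ s in (0:ℝ)..t1, I s := hfin
        _ = W 0 - W t1 := hWint t1 ht10
    linarith
  have hItendsto : Tendsto I atTop (𝓝 0) := hLeq ▸ hIL
  -- B is positive
  have hBlb : c₀ ≤ B := le_ciInf (fun t => hSlb _ (le_max_right t 0))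
  have hBpos : 0 < B := lt_of_lt_of_le (Real.exp_pos _) hBlb
  -- B < γ/β
  have hSgeB : ∀ t ∈ Ici (0:ℝ), B ≤ S t := by
    intro t ht
    apply le_of_tendsto hSB
    filter_upwards [eventually_ge_atTop t] with u hu
    exact hSanti ht (le_trans ht hu) hu
  have hBlt : B < γ/β := by
    by_contra hcon
    push_neg at hcon
    have hImono : MonotoneOn I (Ici 0) := by
      apply monotoneOn_of_deriv_nonneg (convex_Ici 0) hIcont
      · intro x hx
        simp only [interior_Ici, mem_Ioi] at hx
        exact ((hI x (le_of_lt hx)).hasDerivAt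
          (Ici_mem_nhds hx)).differentiableAt.differentiableWithinAt
      · intro x hx
        simp only [interior_Ici, mem_Ioi] at hx
        rw [((hI x (le_of_lt hx)).hasDerivAt (Ici_mem_nhds hx)).deriv]
        have h1 : γ/β ≤ S x := le_trans hcon (hSgeB x (le_of_lt hx))
        have h2 : γ ≤ β * S x := by
          rw [div_le_iff₀ hβ] at h1
          linarith [mul_comm (S x) β]
        have h3 := hIpos x (le_of_lt hx)
        nlinarith
    have : I 0 ≤ 0 := by
      apply ge_of_tendsto hItendsto
      filter_upwards [eventually_ge_atTop (0:ℝ)] with t ht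
      exact hImono (le_refl (0:ℝ)) ht ht
    rw [hI0] at this
    linarith [hI₀.1]
  -- the transcendental equation
  have hlogT : Tendsto (fun t => Real.log (S t)) atTop (𝓝 (Real.log B)) :=
    ((Real.continuousAt_log (ne_of_gt hBpos)).tendsto).comp hSB
  have hHT : Tendsto H atTop (𝓝 (B + 0 - γ/β * Real.log B)) :=
    (hSB.add hItendsto).sub (tendsto_const_nhds.mul hlogT)
  have hHT' : Tendsto H atTop (𝓝 (H 0)) := by
    apply tendsto_const_nhds.congr'
    filter_upwards [eventually_ge_atTop (0:ℝ)] with t ht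
    exact (hHc t ht).symm
  have heq := tendsto_nhds_unique hHT hHT'
  refine ⟨B, hSB, hItendsto, ⟨hBpos, hBlt⟩, ?_⟩
  have hH0 : H 0 = S₀ + I₀ - γ/β * Real.log S₀ := by
    simp [hHdef, hS0, hI0]
  rw [hH0] at heq
  linarith
end
end

section
/- Suppose β_n > γ. Then there exists ε₀ > 0 such that for all ε ∈ (0, ε₀) one has Q(1 − ε, ε, T) < 0. In fact, for the quarantined solution (S, I) with S(0) = 1 − ε, I(0) = ε, one has I(t) ≤ ε · max{1, e^{(β_q − γ)T}} and S(t) ≥ (1 − ε) · exp(−β_q ε T · max{1, e^{(β_q − γ)T}}) for all t ∈ [0, T], and if ε₀ is small enough these bounds force S(t) > γ/β_n on [0,T] and hence Q(1 − ε, ε, T) < 0. -/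
open Set Filter MeasureTheory Topology Asymptotics
open scoped Classical

noncomputable section

/-- if `βₙ > γ` there is `ε₀ > 0` such that for every `ε ∈ (0, ε₀)`,
the quarantined solution with `S(0) = 1 - ε`, `I(0) = ε` satisfies the stated bounds
on `[0, T]`, in particular `S > γ/βₙ` there, and hence `Q(1 - ε, ε, T) < 0`. -/
theorem Q_neg_for_small_initial_infection
    (βq βn γ T : ℝ) (hβq : 0 < βq) (hβ : βq < βn) (hγ : 0 < γ) (hT : 0 < T)
    (hsup : γ < βn) :
    ∃ ε₀ > (0 : ℝ), ∀ ε ∈ Ioo (0 : ℝ) ε₀,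
      ∀ S I : ℝ → ℝ,
        (∀ t ∈ Icc (0 : ℝ) T, HasDerivWithinAt S (-(βq * S t * I t)) (Icc 0 T) t) →
        (∀ t ∈ Icc (0 : ℝ) T, HasDerivWithinAt I (βq * S t * I t - γ * I t) (Icc 0 T) t) →
        S 0 = 1 - ε → I 0 = ε →
        (∀ t ∈ Icc (0 : ℝ) T,
          I t ≤ ε * max 1 (Real.exp ((βq - γ) * T)) ∧
          (1 - ε) * Real.exp (-(βq * ε * T * max 1 (Real.exp ((βq - γ) * T)))) ≤ S t ∧
          γ / βn < S t) ∧
        (∫ t in (0 : ℝ)..T, (γ - βn * S t) / I t) < 0 := by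
  set M : ℝ := max 1 (Real.exp ((βq - γ) * T)) with hMdef
  have hM1 : (1:ℝ) ≤ M := le_max_left _ _
  have hM0 : (0:ℝ) < M := lt_of_lt_of_le one_pos hM1
  have hβn : (0:ℝ) < βn := lt_trans hγ hsup
  have hc1 : γ / βn < 1 := (div_lt_one hβn).2 hsup
  have hcpos : 0 < γ / βn := div_pos hγ hβn
  have hden : (0:ℝ) < 1 + βq * T * M := by positivity
  refine ⟨(1 - γ / βn) / (1 + βq * T * M), div_pos (by linarith) hden, ?_⟩
  rintro ε ⟨hε0, hεlt⟩ S I hS hI hS0 hI0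
  have hεb : ε * (1 + βq * T * M) < 1 - γ / βn := by
    rw [lt_div_iff₀ hden] at hεlt
    linarith
  have hε1 : ε < 1 := by
    nlinarith [mul_nonneg hε0.le (by positivity : (0:ℝ) ≤ βq * T * M)]
  -- the projection of ℝ onto [0, T]
  set P : ℝ → ℝ := fun s => max 0 (min s T) with hPdef
  have hPcont : Continuous P := continuous_const.max (continuous_id.min continuous_const)
  have hPmem : ∀ s, P s ∈ Icc (0:ℝ) T :=
    fun s => ⟨le_max_left _ _, max_le hT.le (min_le_right _ _)⟩
  have hPt : ∀ t ∈ Icc (0:ℝ) T, P t = t := by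
    intro t ht
    simp [hPdef, min_eq_left ht.2, max_eq_right ht.1]
  have h0mem : (0:ℝ) ∈ Icc (0:ℝ) T := ⟨le_refl 0, hT.le⟩
  have hScont : ContinuousOn S (Icc 0 T) := fun t ht => (hS t ht).continuousWithinAt
  have hIcont : ContinuousOn I (Icc 0 T) := fun t ht => (hI t ht).continuousWithinAt
  have hSP : Continuous fun s => S (P s) := hScont.comp_continuous hPcont hPmem
  have hIP : Continuous fun s => I (P s) := hIcont.comp_continuous hPcont hPmem
  -- the integral of βq S - γ, and the exact formula for I
  set g : ℝ → ℝ := fun s => βq * S (P s) - γ with hgdef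
  have hgcont : Continuous g := (continuous_const.mul hSP).sub continuous_const
  set G : ℝ → ℝ := fun u => ∫ s in (0:ℝ)..u, g s with hGdef
  have hG : ∀ t : ℝ, HasDerivAt G (g t) t := fun t =>
    intervalIntegral.integral_hasDerivAt_right (hgcont.intervalIntegrable _ _)
      hgcont.stronglyMeasurable.stronglyMeasurableAtFilter hgcont.continuousAt
  have hIform : ∀ t ∈ Icc (0:ℝ) T, I t = ε * Real.exp (G t) := by
    have hderiv : ∀ t ∈ Icc (0:ℝ) T,
        HasDerivWithinAt (fun u => I u * Real.exp (-G u)) 0 (Icc 0 T) t := by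
      intro t ht
      have h1 := (hI t ht).mul (((hG t).hasDerivWithinAt.neg).exp)
      convert h1 using 1
      on_goal 1 => rfl
      on_goal 1 => rfl
      on_goal 1 => rfl
      have hgt : g t = βq * S t - γ := by rw [hgdef]; simp [hPt t ht]
      rw [hgt]; ring
    intro t ht
    have key : |I t * Real.exp (-G t) - I 0 * Real.exp (-G 0)| ≤ 0 := by
      have hb := (convex_Icc (0:ℝ) T).norm_image_sub_le_of_norm_hasDerivWithin_le
        (f' := fun _ => (0:ℝ)) (C := 0) hderiv (fun x _ => by simp) h0mem ht
      simpa using hb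
    have key2 : I t * Real.exp (-G t) = I 0 * Real.exp (-G 0) := by
      have := le_antisymm key (abs_nonneg _)
      rw [abs_eq_zero, sub_eq_zero] at this
      exact this
    have hG0 : G 0 = 0 := intervalIntegral.integral_same
    rw [hI0, hG0, neg_zero, Real.exp_zero, mul_one, Real.exp_neg] at key2
    have hne := Real.exp_ne_zero (G t)
    field_simp at key2
    linarith
  have hIpos : ∀ t ∈ Icc (0:ℝ) T, 0 < I t := by
    intro t ht
    rw [hIform t ht]
    positivity
  -- the integral of βq I, and the exact formula for S
  set k : ℝ → ℝ := fun s => βq * I (P s) with hkdef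
  have hkcont : Continuous k := continuous_const.mul hIP
  set H : ℝ → ℝ := fun u => ∫ s in (0:ℝ)..u, k s with hHdef
  have hH : ∀ t : ℝ, HasDerivAt H (k t) t := fun t =>
    intervalIntegral.integral_hasDerivAt_right (hkcont.intervalIntegrable _ _)
      hkcont.stronglyMeasurable.stronglyMeasurableAtFilter hkcont.continuousAt
  have hSform : ∀ t ∈ Icc (0:ℝ) T, S t = (1 - ε) * Real.exp (-H t) := by
    have hderiv : ∀ t ∈ Icc (0:ℝ) T,
        HasDerivWithinAt (fun u => S u * Real.exp (H u)) 0 (Icc 0 T) t := by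
      intro t ht
      have h1 := (hS t ht).mul ((hH t).hasDerivWithinAt.exp)
      convert h1 using 1
      on_goal 1 => rfl
      on_goal 1 => rfl
      on_goal 1 => rfl
      have hkt : k t = βq * I t := by rw [hkdef]; simp [hPt t ht]
      rw [hkt]; ring
    intro t ht
    have key : |S t * Real.exp (H t) - S 0 * Real.exp (H 0)| ≤ 0 := by
      have hb := (convex_Icc (0:ℝ) T).norm_image_sub_le_of_norm_hasDerivWithin_le
        (f' := fun _ => (0:ℝ)) (C := 0) hderiv (fun x _ => by simp) h0mem ht
      simpa using hb
    have key2 : S t * Real.exp (H t) = S 0 * Real.exp (H 0) := by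
      have := le_antisymm key (abs_nonneg _)
      rw [abs_eq_zero, sub_eq_zero] at this
      exact this
    have hH0 : H 0 = 0 := intervalIntegral.integral_same
    rw [hS0, hH0, Real.exp_zero, mul_one] at key2
    rw [Real.exp_neg]
    have hne := Real.exp_ne_zero (H t)
    field_simp
    linarith
  -- H is nonnegative, so S ≤ 1 - ε
  have hHnonneg : ∀ t ∈ Icc (0:ℝ) T, 0 ≤ H t := by
    intro t ht
    apply intervalIntegral.integral_nonneg ht.1
    intro u _
    have := hIpos (P u) (hPmem u)
    rw [hkdef]
    positivity
  have hSle : ∀ t ∈ Icc (0:ℝ) T, S t ≤ 1 - ε := by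
    intro t ht
    rw [hSform t ht]
    have h1 : Real.exp (-H t) ≤ 1 := by
      rw [← Real.exp_zero]
      exact Real.exp_le_exp.2 (by linarith [hHnonneg t ht])
    nlinarith
  -- G ≤ (βq - γ) t, so I ≤ ε M
  have hGle : ∀ t ∈ Icc (0:ℝ) T, G t ≤ (βq - γ) * t := by
    intro t ht
    have hmono : G t ≤ ∫ _ in (0:ℝ)..t, (βq - γ) := by
      apply intervalIntegral.integral_mono_on ht.1 (hgcont.intervalIntegrable _ _)
        intervalIntegrable_const
      intro u _
      have h1 := hSle (P u) (hPmem u)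
      rw [hgdef]
      simp only
      nlinarith
    rw [intervalIntegral.integral_const, smul_eq_mul] at hmono
    nlinarith [hmono]
  have hexpM : ∀ t ∈ Icc (0:ℝ) T, Real.exp ((βq - γ) * t) ≤ M := by
    intro t ht
    rcases le_total (βq - γ) 0 with h | h
    · refine le_trans ?_ hM1
      rw [← Real.exp_zero]
      exact Real.exp_le_exp.2 (mul_nonpos_of_nonpos_of_nonneg h ht.1)
    · refine le_trans (Real.exp_le_exp.2 ?_) (le_max_right _ _)
      nlinarith [ht.2]
  have hIle : ∀ t ∈ Icc (0:ℝ) T, I t ≤ ε * M := by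
    intro t ht
    rw [hIform t ht]
    exact mul_le_mul_of_nonneg_left
      (le_trans (Real.exp_le_exp.2 (hGle t ht)) (hexpM t ht)) hε0.le
  -- H ≤ βq ε T M, so S ≥ (1-ε) exp(-(βq ε T M))
  have hHle : ∀ t ∈ Icc (0:ℝ) T, H t ≤ βq * ε * T * M := by
    intro t ht
    have hmono : H t ≤ ∫ _ in (0:ℝ)..t, βq * (ε * M) := by
      apply intervalIntegral.integral_mono_on ht.1 (hkcont.intervalIntegrable _ _)
        intervalIntegrable_const
      intro u _
      have h1 := hIle (P u) (hPmem u)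
      rw [hkdef]
      simp only
      nlinarith
    rw [intervalIntegral.integral_const, smul_eq_mul] at hmono
    nlinarith [mul_nonneg (sub_nonneg.2 ht.2) (by positivity : (0:ℝ) ≤ βq * (ε * M))]
  have hSge : ∀ t ∈ Icc (0:ℝ) T,
      (1 - ε) * Real.exp (-(βq * ε * T * M)) ≤ S t := by
    intro t ht
    rw [hSform t ht]
    exact mul_le_mul_of_nonneg_left
      (Real.exp_le_exp.2 (neg_le_neg (hHle t ht))) (by linarith)
  have hSgt : ∀ t ∈ Icc (0:ℝ) T, γ / βn < S t := by
    intro t ht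
    refine lt_of_lt_of_le ?_ (hSge t ht)
    have hx : (0:ℝ) ≤ βq * ε * T * M := by positivity
    have hexp_ge : 1 - βq * ε * T * M ≤ Real.exp (-(βq * ε * T * M)) := by
      have := Real.add_one_le_exp (-(βq * ε * T * M))
      linarith
    nlinarith [mul_nonneg (by linarith : (0:ℝ) ≤ 1 - ε)
      (by linarith : (0:ℝ) ≤ Real.exp (-(βq * ε * T * M)) - (1 - βq * ε * T * M)),
      mul_nonneg hε0.le hx]
  constructor
  · exact fun t ht => ⟨hIle t ht, hSge t ht, hSgt t ht⟩
  · have hfi : IntervalIntegrable (fun t => (βn * S t - γ) / I t) volume 0 T := by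
      apply ContinuousOn.intervalIntegrable
      rw [uIcc_of_le hT.le]
      exact ((continuousOn_const.mul hScont).sub continuousOn_const).div hIcont
        fun t ht => (hIpos t ht).ne'
    have hpos : 0 < ∫ t in (0:ℝ)..T, (βn * S t - γ) / I t := by
      refine intervalIntegral.intervalIntegral_pos_of_pos_on hfi ?_ hT
      intro x hx
      have hx' : x ∈ Icc (0:ℝ) T := ⟨hx.1.le, hx.2.le⟩
      have h1 := hSgt x hx'
      rw [div_lt_iff₀ hβn] at h1
      exact div_pos (by linarith) (hIpos x hx')
    have heq : (∫ t in (0:ℝ)..T, (γ - βn * S t) / I t)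
        = -∫ t in (0:ℝ)..T, (βn * S t - γ) / I t := by
      rw [← intervalIntegral.integral_neg]
      apply intervalIntegral.integral_congr
      intro x _
      show (γ - βn * S x) / I x = -((βn * S x - γ) / I x)
      ring
    rw [heq]
    linarith
end
end
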